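/- arXiv:2002.01638 — 4 statements merged into one kernel-verified Lean document; each statement's English description precedes it below -/
import Mathlib

section
/- For γ ∈ ℝ^d and i, j ∈ {1,...,d}, the Dunkl operators commute on polynomials: 𝒟_i^γ 𝒟_j^γ p = 𝒟_j^γ 𝒟_i^γ p for every polynomial p in d variables. -/
open MeasureTheory Metric

noncomputable section

/-- Euclidean space ℝ^d. -/
abbrev E (d : ℕ) := EuclideanSpace ℝ (Fin d)

/-- The reflection flipping the sign of the j-th coordinate. -/
def reflCoord {d : ℕ} (j : Fin d) (x : E d) : E d := WithLp.toLp 2 (fun i => if i = j then -x i else x i)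

/-- The j-th partial derivative. -/
def pd {d : ℕ} (j : Fin d) (f : E d → ℝ) (x : E d) : ℝ :=
  fderiv ℝ f x (EuclideanSpace.single j 1)

/-- The difference quotient ρ_j(f)(x) = (f(x) - f(σ_j x))/x_j, extended by 2 ∂_j f(x)
on the hyperplane {x_j = 0}. -/
def rho {d : ℕ} (j : Fin d) (f : E d → ℝ) (x : E d) : ℝ :=
  if x j = 0 then 2 * pd j f x else (f x - f (reflCoord j x)) / x j

/-- The Dunkl operator 𝒟_j^γ. -/
def dunkl {d : ℕ} (γ : Fin d → ℝ) (j : Fin d) (f : E d → ℝ) (x : E d) : ℝ :=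
  pd j f x + γ j / 2 * rho j f x

/-- The weight W_{α,γ}(x) = (1-‖x‖²)^α ∏ |x_i|^{γ_i}. -/
def W {d : ℕ} (α : ℝ) (γ : Fin d → ℝ) (x : E d) : ℝ :=
  (1 - ‖x‖ ^ 2) ^ α * ∏ i, |x i| ^ (γ i)

/-- The weighted inner product ⟨u,v⟩_{α,γ} = ∫_{B^d} u v W_{α,γ}. -/
def ip {d : ℕ} (α : ℝ) (γ : Fin d → ℝ) (u v : E d → ℝ) : ℝ :=
  ∫ x in ball (0 : E d) 1, u x * v x * W α γ x

/-- Evaluation of a d-variate polynomial as a function on E d. -/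
def evalP {d : ℕ} (p : MvPolynomial (Fin d) ℝ) (x : E d) : ℝ :=
  MvPolynomial.eval (fun i => x i) p

/-- Membership in the orthogonal polynomial space 𝒱_k^{α,γ}: a polynomial of total
degree ≤ k that is ⟨·,·⟩_{α,γ}-orthogonal to all polynomials of total degree < k. -/
def memV {d : ℕ} (α : ℝ) (γ : Fin d → ℝ) (k : ℕ) (f : E d → ℝ) : Prop :=
  (∃ p : MvPolynomial (Fin d) ℝ, p.totalDegree ≤ k ∧ f = evalP p) ∧
  ∀ q : MvPolynomial (Fin d) ℝ, q.totalDegree < k → ip α γ f (evalP q) = 0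

/-- The adjoint (parameter-lowering) operator 𝒟_j^{α,γ;⋆}. -/
def dunklStar {d : ℕ} (α : ℝ) (γ : Fin d → ℝ) (j : Fin d) (f : E d → ℝ) (x : E d) : ℝ :=
  -(1 - ‖x‖ ^ 2) * dunkl γ j f x + 2 * (α + 1) * x j * f x

/-- The generalized angular derivative 𝒟_{i,j}^γ = x_i 𝒟_j^γ - x_j 𝒟_i^γ. -/
def dunklAng {d : ℕ} (γ : Fin d → ℝ) (i j : Fin d) (f : E d → ℝ) (x : E d) : ℝ :=
  x i * dunkl γ j f x - x j * dunkl γ i f x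

/-- λ^{α,γ} = α + (Σ γ_i)/2 + d/2. -/
def lam (d : ℕ) (α : ℝ) (γ : Fin d → ℝ) : ℝ := α + (∑ i, γ i) / 2 + d / 2

/-- Iterate of a single Dunkl operator. -/
def dunklPow {d : ℕ} (γ : Fin d → ℝ) (j : Fin d) : ℕ → (E d → ℝ) → E d → ℝ
  | 0, f => f
  | n + 1, f => dunkl γ j (dunklPow γ j n f)

/-- Iterated Dunkl operator 𝒟_a^γ for a multi-index a. -/
def dunklMulti {d : ℕ} (γ : Fin d → ℝ) (a : Fin d → ℕ) (f : E d → ℝ) : E d → ℝ :=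
  (List.finRange d).foldr (fun j g => dunklPow γ j (a j) g) f

/-- Iterate of a single partial derivative. -/
def pdPow {d : ℕ} (j : Fin d) : ℕ → (E d → ℝ) → E d → ℝ
  | 0, f => f
  | n + 1, f => pd j (pdPow j n f)

/-- Iterated partial derivative ∂_a for a multi-index a. -/
def pdMulti {d : ℕ} (a : Fin d → ℕ) (f : E d → ℝ) : E d → ℝ :=
  (List.finRange d).foldr (fun j g => pdPow j (a j) g) f

/-- The operator x·∇. -/
def xdel {d : ℕ} (u : E d → ℝ) (x : E d) : ℝ := ∑ i, x i * pd i u x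

/-- The Sturm–Liouville operator ℒ^{α,γ} = -Δ_h + (x·∇)² + 2λ^{α,γ} x·∇. -/
def Lop {d : ℕ} (α : ℝ) (γ : Fin d → ℝ) (u : E d → ℝ) (x : E d) : ℝ :=
  -(∑ i, dunkl γ i (dunkl γ i u) x) + xdel (xdel u) x + 2 * lam d α γ * xdel u x




namespace DunklAux

open MvPolynomial

variable {d : ℕ}

noncomputable def sigmaP (j : Fin d) : MvPolynomial (Fin d) ℝ →ₐ[ℝ] MvPolynomial (Fin d) ℝ :=
  aeval fun i => if i = j then -X i else X i

lemma sigmaP_monomial (j : Fin d) (a : Fin d →₀ ℕ) (c : ℝ) :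
    sigmaP j (monomial a c) = monomial a ((-1) ^ (a j) * c) := by
  classical
  rw [sigmaP, aeval_monomial]
  rw [Finsupp.prod]
  have h1 : ∀ n ∈ a.support, (if n = j then -X n else X n : MvPolynomial (Fin d) ℝ) ^ a n
      = (if n = j then ((-1 : MvPolynomial (Fin d) ℝ)) ^ a n else 1) * X n ^ a n := by
    intro n _
    split_ifs with h
    · rw [neg_pow]
    · ring
  rw [Finset.prod_congr rfl h1, Finset.prod_mul_distrib]
  rw [Finset.prod_ite_eq' a.support j (fun n => ((-1 : MvPolynomial (Fin d) ℝ)) ^ a n)]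
  have h2 : (if j ∈ a.support then ((-1 : MvPolynomial (Fin d) ℝ)) ^ a j else 1)
      = ((-1 : MvPolynomial (Fin d) ℝ)) ^ a j := by
    split_ifs with h
    · rfl
    · rw [Finsupp.notMem_support_iff.mp h]; ring
  rw [h2, monomial_eq, Finsupp.prod]
  have h3 : ((-1 : MvPolynomial (Fin d) ℝ)) = C (-1 : ℝ) := by simp
  rw [h3, ← C_pow, algebraMap_eq, C_mul]
  ring
lemma coeff_sigmaP (j : Fin d) (a : Fin d →₀ ℕ) (p : MvPolynomial (Fin d) ℝ) :
    coeff a (sigmaP j p) = (-1) ^ (a j) * coeff a p := by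
  induction p using MvPolynomial.induction_on' with
  | monomial b c =>
    rw [sigmaP_monomial, coeff_monomial, coeff_monomial]
    split_ifs with h
    · subst h; rfl
    · ring
  | add p q hp hq => simp [map_add, hp, hq]; ring

lemma X_dvd_sub_sigmaP (j : Fin d) (p : MvPolynomial (Fin d) ℝ) :
    (X j : MvPolynomial (Fin d) ℝ) ∣ (p - sigmaP j p) := by
  induction p using MvPolynomial.induction_on' with
  | monomial a c =>
    rw [sigmaP_monomial, ← map_sub, X_dvd_monomial]
    rcases Nat.eq_zero_or_pos (a j) with h | h
    · left; rw [h]; ring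
    · right; omega
  | add p q hp hq =>
    have : p + q - sigmaP j (p + q) = (p - sigmaP j p) + (q - sigmaP j q) := by
      rw [map_add]; ring
    rw [this]; exact dvd_add hp hq

noncomputable def rhoP (j : Fin d) (p : MvPolynomial (Fin d) ℝ) : MvPolynomial (Fin d) ℝ :=
  (X_dvd_sub_sigmaP j p).choose

lemma rhoP_spec (j : Fin d) (p : MvPolynomial (Fin d) ℝ) :
    p - sigmaP j p = X j * rhoP j p :=
  (X_dvd_sub_sigmaP j p).choose_spec

lemma rhoP_unique {j : Fin d} {p q : MvPolynomial (Fin d) ℝ}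
    (h : p - sigmaP j p = X j * q) : rhoP j p = q :=
  mul_left_cancel₀ (X_ne_zero j) ((rhoP_spec j p).symm.trans h)

lemma rhoP_add (j : Fin d) (p q : MvPolynomial (Fin d) ℝ) :
    rhoP j (p + q) = rhoP j p + rhoP j q := by
  refine rhoP_unique ?_
  rw [map_add, mul_add, ← rhoP_spec, ← rhoP_spec]; ring

lemma sigmaP_C (j : Fin d) (c : ℝ) : sigmaP j (C c) = C c := by
  simp [sigmaP]

lemma rhoP_C_mul (j : Fin d) (c : ℝ) (p : MvPolynomial (Fin d) ℝ) :
    rhoP j (C c * p) = C c * rhoP j p := by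
  refine rhoP_unique ?_
  rw [map_mul, sigmaP_C, ← mul_sub, rhoP_spec]; ring

lemma pderiv_pderiv_comm (i j : Fin d) (p : MvPolynomial (Fin d) ℝ) :
    pderiv i (pderiv j p) = pderiv j (pderiv i p) := by
  rcases eq_or_ne i j with rfl | hij
  · rfl
  induction p using MvPolynomial.induction_on' with
  | monomial a c =>
    rw [pderiv_monomial, pderiv_monomial, pderiv_monomial, pderiv_monomial]
    have h1 : ((a - Finsupp.single j 1 : Fin d →₀ ℕ)) i = a i := by
      rw [Finsupp.tsub_apply, Finsupp.single_apply]
      simp [hij.symm]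
    have h2 : ((a - Finsupp.single i 1 : Fin d →₀ ℕ)) j = a j := by
      rw [Finsupp.tsub_apply, Finsupp.single_apply]
      simp [hij]
    have h3 : a - Finsupp.single j 1 - Finsupp.single i 1
        = a - Finsupp.single i 1 - Finsupp.single j 1 := by
      rw [tsub_tsub, tsub_tsub, add_comm]
    rw [h1, h2, h3]; ring_nf
  | add p q hp hq => simp [map_add, hp, hq]

lemma pderiv_sigmaP (i j : Fin d) (hij : i ≠ j) (p : MvPolynomial (Fin d) ℝ) :
    pderiv i (sigmaP j p) = sigmaP j (pderiv i p) := by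
  induction p using MvPolynomial.induction_on' with
  | monomial a c =>
    rw [sigmaP_monomial, pderiv_monomial, pderiv_monomial, sigmaP_monomial]
    have h1 : ((a - Finsupp.single i 1 : Fin d →₀ ℕ)) j = a j := by
      rw [Finsupp.tsub_apply, Finsupp.single_apply]
      simp [hij]
    rw [h1]; ring_nf
  | add p q hp hq => simp [map_add, hp, hq]

lemma pderiv_sigmaP_self (j : Fin d) (p : MvPolynomial (Fin d) ℝ) :
    pderiv j (sigmaP j p) = - sigmaP j (pderiv j p) := by
  induction p using MvPolynomial.induction_on' with
  | monomial a c =>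
    rw [sigmaP_monomial, pderiv_monomial, pderiv_monomial, sigmaP_monomial]
    rcases Nat.eq_zero_or_pos (a j) with h | h
    · simp [h]
    have h1 : ((a - Finsupp.single j 1 : Fin d →₀ ℕ)) j = a j - 1 := by
      rw [Finsupp.tsub_apply, Finsupp.single_apply]; simp
    have h2 : ((-1 : ℝ)) ^ (a j - 1) = -(-1 : ℝ) ^ (a j) := by
      conv_rhs => rw [show a j = (a j - 1) + 1 by omega]
      rw [pow_succ]; ring
    rw [h1, h2, ← map_neg]
    congr 1
    ring
  | add p q hp hq => simp only [map_add]; rw [hp, hq]; ring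

lemma sigmaP_comm (i j : Fin d) (p : MvPolynomial (Fin d) ℝ) :
    sigmaP i (sigmaP j p) = sigmaP j (sigmaP i p) := by
  induction p using MvPolynomial.induction_on' with
  | monomial a c =>
    rw [sigmaP_monomial, sigmaP_monomial, sigmaP_monomial, sigmaP_monomial]
    ring_nf
  | add p q hp hq => simp [map_add, hp, hq]

lemma sigmaP_X_of_ne (i j : Fin d) (hij : i ≠ j) :
    sigmaP i (X j : MvPolynomial (Fin d) ℝ) = X j := by
  simp [sigmaP, hij.symm]

lemma sigmaP_rhoP (i j : Fin d) (hij : i ≠ j) (p : MvPolynomial (Fin d) ℝ) :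
    sigmaP i (rhoP j p) = rhoP j (sigmaP i p) := by
  refine (rhoP_unique ?_).symm
  have h := congrArg (sigmaP i) (rhoP_spec j p)
  rw [map_sub, map_mul, sigmaP_X_of_ne i j hij, sigmaP_comm] at h
  exact h

lemma pderiv_rhoP (i j : Fin d) (hij : i ≠ j) (p : MvPolynomial (Fin d) ℝ) :
    pderiv i (rhoP j p) = rhoP j (pderiv i p) := by
  refine (rhoP_unique ?_).symm
  have h := congrArg (pderiv i) (rhoP_spec j p)
  rw [map_sub, pderiv_sigmaP i j hij, pderiv_mul, pderiv_X_of_ne (Ne.symm hij)] at h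
  simpa using h

lemma rhoP_rhoP_key (i j : Fin d) (hij : i ≠ j) (p : MvPolynomial (Fin d) ℝ) :
    X i * (X j * rhoP i (rhoP j p))
      = p - sigmaP j p - sigmaP i p + sigmaP i (sigmaP j p) := by
  calc X i * (X j * rhoP i (rhoP j p)) = X j * (X i * rhoP i (rhoP j p)) := by ring
  _ = X j * (rhoP j p - sigmaP i (rhoP j p)) := by rw [← rhoP_spec]
  _ = X j * rhoP j p - X j * rhoP j (sigmaP i p) := by rw [mul_sub, sigmaP_rhoP i j hij]
  _ = (p - sigmaP j p) - (sigmaP i p - sigmaP j (sigmaP i p)) := by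
      rw [← rhoP_spec, ← rhoP_spec]
  _ = _ := by rw [sigmaP_comm]; ring

lemma rhoP_rhoP (i j : Fin d) (hij : i ≠ j) (p : MvPolynomial (Fin d) ℝ) :
    rhoP i (rhoP j p) = rhoP j (rhoP i p) := by
  have h : X i * (X j * rhoP i (rhoP j p)) = X i * (X j * rhoP j (rhoP i p)) := by
    calc X i * (X j * rhoP i (rhoP j p))
        = p - sigmaP j p - sigmaP i p + sigmaP i (sigmaP j p) := rhoP_rhoP_key i j hij p
    _ = p - sigmaP i p - sigmaP j p + sigmaP j (sigmaP i p) := by rw [sigmaP_comm]; ring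
    _ = X j * (X i * rhoP j (rhoP i p)) := (rhoP_rhoP_key j i hij.symm p).symm
    _ = X i * (X j * rhoP j (rhoP i p)) := by ring
  exact mul_left_cancel₀ (X_ne_zero j) (mul_left_cancel₀ (X_ne_zero i) h)
noncomputable def DP (γ : Fin d → ℝ) (j : Fin d) (p : MvPolynomial (Fin d) ℝ) :
    MvPolynomial (Fin d) ℝ :=
  pderiv j p + C (γ j / 2) * rhoP j p

lemma DP_comm (γ : Fin d → ℝ) (i j : Fin d) (p : MvPolynomial (Fin d) ℝ) :
    DP γ i (DP γ j p) = DP γ j (DP γ i p) := by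
  rcases eq_or_ne i j with rfl | hij
  · rfl
  · simp only [DP, map_add, rhoP_add, pderiv_C_mul, rhoP_C_mul]
    rw [pderiv_pderiv_comm, pderiv_rhoP i j hij, pderiv_rhoP j i hij.symm,
      rhoP_rhoP i j hij]
    ring

lemma hasFDerivAt_evalP (p : MvPolynomial (Fin d) ℝ) (x : E d) :
    HasFDerivAt (evalP p)
      (∑ k, evalP (pderiv k p) x • (EuclideanSpace.proj (𝕜 := ℝ) k : E d →L[ℝ] ℝ)) x := by
  induction p using MvPolynomial.induction_on with
  | C a =>
    have h : evalP (d := d) (C a) = fun _ => a := by funext y; simp [evalP]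
    have h2 : (∑ k, evalP (d := d) (pderiv k (C a)) x • (EuclideanSpace.proj (𝕜 := ℝ) k : E d →L[ℝ] ℝ))
        = 0 := by simp [pderiv_C, evalP]
    rw [h, h2]
    exact hasFDerivAt_const a x
  | add p q hp hq =>
    have h : evalP (p + q) = fun y => evalP p y + evalP q y := by funext y; simp [evalP]
    rw [h]
    have h2 := hp.add hq
    refine h2.congr_fderiv (Eq.symm ?_)
    rw [← Finset.sum_add_distrib]
    refine Finset.sum_congr rfl fun k _ => ?_
    simp [evalP, add_smul]
  | mul_X p k hp =>
    have h : evalP (p * X k)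
        = fun y => evalP p y * (EuclideanSpace.proj (𝕜 := ℝ) k : E d →L[ℝ] ℝ) y := by
      funext y; simp [evalP]
    rw [h]
    have hk : HasFDerivAt (fun y : E d => (EuclideanSpace.proj (𝕜 := ℝ) k : E d →L[ℝ] ℝ) y)
        (EuclideanSpace.proj (𝕜 := ℝ) k : E d →L[ℝ] ℝ) x :=
      (EuclideanSpace.proj (𝕜 := ℝ) (ι := Fin d) k).hasFDerivAt (x := x)
    have h2 := hp.mul hk
    refine h2.congr_fderiv (Eq.symm ?_)
    refine ContinuousLinearMap.ext fun v => ?_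
    simp only [ContinuousLinearMap.sum_apply, ContinuousLinearMap.smul_apply,
      ContinuousLinearMap.add_apply, smul_eq_mul]
    have hterm : ∀ m : Fin d, evalP (pderiv m (p * X k)) x * (EuclideanSpace.proj (𝕜 := ℝ) m : E d →L[ℝ] ℝ) v
        = x k * (evalP (pderiv m p) x * (EuclideanSpace.proj (𝕜 := ℝ) m : E d →L[ℝ] ℝ) v)
          + evalP p x * (if m = k then (EuclideanSpace.proj (𝕜 := ℝ) m : E d →L[ℝ] ℝ) v else 0) := by
      intro m
      rw [pderiv_mul]
      rcases eq_or_ne m k with rfl | hmk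
      · simp [evalP, pderiv_X_self]; ring
      · simp [evalP, pderiv_X_of_ne (Ne.symm hmk), hmk]; ring
    rw [Finset.sum_congr rfl fun m _ => hterm m, Finset.sum_add_distrib, ← Finset.mul_sum,
      ← Finset.mul_sum, Finset.sum_ite_eq' Finset.univ k]
    simp
    ring

lemma pd_evalP (j : Fin d) (p : MvPolynomial (Fin d) ℝ) (x : E d) :
    pd j (evalP p) x = evalP (pderiv j p) x := by
  rw [pd, (hasFDerivAt_evalP p x).fderiv]
  simp only [ContinuousLinearMap.sum_apply, ContinuousLinearMap.smul_apply, smul_eq_mul]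
  have h : ∀ m : Fin d, (EuclideanSpace.proj (𝕜 := ℝ) m : E d →L[ℝ] ℝ) (EuclideanSpace.single j (1 : ℝ))
      = if m = j then 1 else 0 := by
    intro m
    simp [EuclideanSpace.single_apply]
  rw [Finset.sum_congr rfl fun m _ => by rw [h m]]
  simp [Finset.sum_ite_eq' Finset.univ j]

lemma aeval_eval (f : Fin d → ℝ) (p : MvPolynomial (Fin d) ℝ) : aeval f p = eval f p := by
  rw [aeval_def, Algebra.algebraMap_self]; rfl

lemma evalP_sigmaP (j : Fin d) (p : MvPolynomial (Fin d) ℝ) (x : E d) :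
    evalP (sigmaP j p) x = evalP p (reflCoord j x) := by
  rw [evalP, evalP, ← aeval_eval, ← aeval_eval, sigmaP, aeval_eq_bind₁, aeval_bind₁]
  refine congrArg (fun f : Fin d → ℝ => aeval (R := ℝ) f p) (funext fun i => ?_)
  rcases eq_or_ne i j with rfl | h
  · simp [reflCoord]
  · simp [reflCoord, h]

lemma rho_evalP (j : Fin d) (p : MvPolynomial (Fin d) ℝ) (x : E d) :
    rho j (evalP p) x = evalP (rhoP j p) x := by
  rw [rho]
  split_ifs with hx
  · have hrefl : reflCoord j x = x := by
      ext i
      show (if i = j then -x i else x i) = x i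
      rcases eq_or_ne i j with rfl | h
      · rw [if_pos rfl]; rw [hx]; ring
      · rw [if_neg h]
    have h := congrArg (pderiv j) (rhoP_spec j p)
    rw [map_sub, pderiv_sigmaP_self, pderiv_mul, pderiv_X_self] at h
    have h2 := congrArg (fun q => evalP q x) h
    simp only [evalP, map_sub, map_neg, map_add, map_mul, eval_X, one_mul] at h2
    rw [show (eval fun i => x i) ((sigmaP j) ((pderiv j) p))
        = evalP (sigmaP j (pderiv j p)) x from rfl, evalP_sigmaP, hrefl, hx] at h2
    rw [pd_evalP]
    simp only [evalP] at h2 ⊢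
    linarith
  · have h := congrArg (fun q => evalP q x) (rhoP_spec j p)
    simp only [evalP, map_sub, map_mul, eval_X] at h
    rw [show (eval fun i => x i) ((sigmaP j) p) = evalP (sigmaP j p) x from rfl,
      evalP_sigmaP] at h
    simp only [evalP] at h ⊢
    rw [h, mul_comm, mul_div_assoc, div_self hx, mul_one]

lemma dunkl_evalP (γ : Fin d → ℝ) (j : Fin d) (p : MvPolynomial (Fin d) ℝ) :
    dunkl γ j (evalP p) = evalP (DP γ j p) := by
  funext x
  rw [dunkl, pd_evalP, rho_evalP, DP]
  simp only [evalP, map_add, map_mul, eval_C]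

end DunklAux

theorem stmt3 (d : ℕ) (γ : Fin d → ℝ) (i j : Fin d) (p : MvPolynomial (Fin d) ℝ) :
    ∀ x : E d, dunkl γ i (dunkl γ j (evalP p)) x = dunkl γ j (dunkl γ i (evalP p)) x := by
  intro x
  rw [DunklAux.dunkl_evalP, DunklAux.dunkl_evalP, DunklAux.dunkl_evalP, DunklAux.dunkl_evalP,
    DunklAux.DP_comm]
end
end

section
/- Let a ∈ ℕ^d be a multi-index and f ∈ C^{|a|} on the closed unit ball of ℝ^d. Then the iterated Dunkl operator satisfies the sup-norm bound ‖𝒟_a^γ f‖_∞ ≤ (∏_{i=1}^d (1+|γ_i|)^{a_i}) ‖∂_a f‖_∞, where both sup-norms are over the closed unit ball. -/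
open MeasureTheory Metric

noncomputable section

variable {d : ℕ}

variable {d : ℕ}

/-- coordinate projection CLM: x ↦ x_j e_j -/
def projL (j : Fin d) : E d →L[ℝ] E d :=
  LinearMap.toContinuousLinearMap
    { toFun := fun x => EuclideanSpace.single j (x j)
      map_add' := by
        intro x y; ext i
        simp only [EuclideanSpace.single_apply, PiLp.add_apply]
        split <;> simp_all
      map_smul' := by
        intro c x; ext i
        simp only [EuclideanSpace.single_apply, PiLp.smul_apply, RingHom.id_apply,
          smul_eq_mul]
        split <;> simp }

/-- scaling of coordinate j by t, as a CLM -/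
def sL (j : Fin d) (t : ℝ) : E d →L[ℝ] E d :=
  ContinuousLinearMap.id ℝ (E d) - projL j + t • projL j

lemma projL_apply (j : Fin d) (x : E d) (i : Fin d) :
    projL j x i = if i = j then x i else 0 := by
  show EuclideanSpace.single j (x j) i = _
  rw [EuclideanSpace.single_apply]
  split
  · rename_i h; rw [h]
  · rfl

lemma sL_apply (j : Fin d) (t : ℝ) (x : E d) (i : Fin d) :
    sL j t x i = if i = j then t * x i else x i := by
  have h : sL j t x i = x i - projL j x i + t * (projL j x i) := rfl
  rw [h, projL_apply]
  split <;> ring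

lemma sL_norm_apply_le (j : Fin d) {t : ℝ} (ht : |t| ≤ 1) (x : E d) :
    ‖sL j t x‖ ≤ ‖x‖ := by
  rw [EuclideanSpace.norm_eq, EuclideanSpace.norm_eq]
  apply Real.sqrt_le_sqrt
  apply Finset.sum_le_sum
  intro i _
  rw [sL_apply]
  split
  · rw [Real.norm_eq_abs, Real.norm_eq_abs, abs_mul]
    calc (|t| * |x i|)^2 ≤ (1 * |x i|)^2 := by
          apply pow_le_pow_left₀ (by positivity)
          exact mul_le_mul_of_nonneg_right ht (abs_nonneg _)
      _ = |x i|^2 := by ring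
  · exact le_refl _

lemma sL_mem_closedBall (j : Fin d) {t : ℝ} (ht : |t| ≤ 1) {x : E d}
    (hx : x ∈ closedBall (0 : E d) 1) : sL j t x ∈ closedBall (0 : E d) 1 := by
  simp only [mem_closedBall, dist_zero_right] at *
  exact le_trans (sL_norm_apply_le j ht x) hx

lemma continuous_sL (j : Fin d) : Continuous fun t : ℝ => sL j t := by
  unfold sL
  exact ((continuous_const).sub continuous_const).add (continuous_id.smul continuous_const)

lemma sL_zero_coord (j : Fin d) (t : ℝ) {x : E d} (hx : x j = 0) : sL j t x = x := by
  ext i; rw [sL_apply]; split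
  · rename_i h; rw [h, hx]; ring
  · rfl

/-- unit coordinate vector -/
def eV {d : ℕ} (j : Fin d) : E d := EuclideanSpace.single j (1:ℝ)

lemma reflCoord_eq (j : Fin d) (x : E d) : reflCoord j x = sL j (-1) x := by
  ext i; rw [sL_apply]; show (if i = j then -x i else x i) = _; split <;> ring_nf

lemma sL_eV (j i : Fin d) (t : ℝ) :
    sL j t (eV i) = if i = j then t • eV i else eV i := by
  ext k
  rw [sL_apply]
  by_cases hij : i = j
  · subst hij
    simp only [if_pos rfl, eV, EuclideanSpace.single_apply, PiLp.smul_apply, smul_eq_mul]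
    split <;> simp_all
  · rw [if_neg hij]
    split
    · rename_i h
      have hki : ¬ (k = i) := by rintro rfl; exact hij h
      simp [eV, EuclideanSpace.single_apply, hki]
    · rfl

lemma sL_opNorm_le (j : Fin d) {t : ℝ} (ht : |t| ≤ 1) : ‖sL j t‖ ≤ 1 := by
  apply ContinuousLinearMap.opNorm_le_bound _ zero_le_one
  intro x; rw [one_mul]; exact sL_norm_apply_le j ht x


section Shape
variable {d : ℕ}

lemma uIoc_abs {t : ℝ} (ht : t ∈ Set.uIoc (-1:ℝ) 1) : |t| ≤ 1 := by
  rw [Set.uIoc_of_le (by norm_num : (-1:ℝ) ≤ 1)] at ht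
  exact abs_le.mpr ⟨le_of_lt ht.1, ht.2⟩

set_option synthInstance.maxHeartbeats 1000000 in
lemma shape_hasFDerivAt (j : Fin d) {F G : Type} [NormedAddCommGroup F] [NormedSpace ℝ F]
    [NormedAddCommGroup G] [NormedSpace ℝ G] [CompleteSpace G]
    (w : ℝ → (F →L[ℝ] G)) (hw : Continuous w) (v : E d → F) (hv : ContDiff ℝ 1 v) (x₀ : E d) :
    HasFDerivAt (fun x => ∫ t in (-1:ℝ)..1, w t (v (sL j t x)))
      (∫ t in (-1:ℝ)..1, (w t).comp ((fderiv ℝ v (sL j t x₀)).comp (sL j t))) x₀ := by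
  obtain ⟨Cv, hCv⟩ := (isCompact_closedBall (0 : E d) (‖x₀‖ + 1)).exists_bound_of_continuousOn
    (hv.continuous_fderiv one_ne_zero).continuousOn
  obtain ⟨Cw, hCw⟩ := (isCompact_Icc (a := (-1:ℝ)) (b := 1)).exists_bound_of_continuousOn
    hw.continuousOn
  have key := intervalIntegral.hasFDerivAt_integral_of_dominated_of_fderiv_le
    (𝕜 := ℝ) (μ := volume) (a := (-1:ℝ)) (b := 1)
    (F := fun x t => w t (v (sL j t x)))
    (F' := fun x t => (w t).comp ((fderiv ℝ v (sL j t x)).comp (sL j t)))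
    (x₀ := x₀) (bound := fun _ => max Cw 0 * (max Cv 0 * 1))
    (s := ball x₀ 1) (ball_mem_nhds x₀ one_pos)
    ?_ ?_ ?_ ?_ ?_ ?_
  · exact key
  · refine Filter.Eventually.of_forall (fun x => ?_)
    exact (hw.clm_apply (hv.continuous.comp
      (((continuous_sL j).clm_apply continuous_const)))).aestronglyMeasurable
  · exact (hw.clm_apply (hv.continuous.comp
      (((continuous_sL j).clm_apply continuous_const)))).intervalIntegrable _ _
  · exact (hw.clm_comp ((((hv.continuous_fderiv one_ne_zero).comp
      ((continuous_sL j).clm_apply continuous_const)).clm_comp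
      (continuous_sL j)))).aestronglyMeasurable
  · refine Filter.Eventually.of_forall (fun t ht x hx => ?_)
    have htabs : |t| ≤ 1 := uIoc_abs ht
    have hball : sL j t x ∈ closedBall (0 : E d) (‖x₀‖ + 1) := by
      simp only [mem_closedBall, dist_zero_right]
      calc ‖sL j t x‖ ≤ ‖x‖ := sL_norm_apply_le j htabs x
        _ = ‖x₀ + (x - x₀)‖ := by rw [show x₀ + (x - x₀) = x by abel]
        _ ≤ ‖x₀‖ + ‖x - x₀‖ := norm_add_le _ _
        _ ≤ ‖x₀‖ + 1 := by
            have : dist x x₀ < 1 := mem_ball.mp hx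
            rw [dist_eq_norm] at this
            linarith
    calc ‖(w t).comp ((fderiv ℝ v (sL j t x)).comp (sL j t))‖
        ≤ ‖w t‖ * ‖(fderiv ℝ v (sL j t x)).comp (sL j t)‖ :=
          ContinuousLinearMap.opNorm_comp_le _ _
      _ ≤ ‖w t‖ * (‖fderiv ℝ v (sL j t x)‖ * ‖sL j t‖) := by
          exact mul_le_mul_of_nonneg_left (ContinuousLinearMap.opNorm_comp_le _ _)
            (norm_nonneg _)
      _ ≤ max Cw 0 * (max Cv 0 * 1) := by
          have h1 : ‖w t‖ ≤ max Cw 0 := le_trans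
            (hCw t (Set.mem_Icc.mpr (abs_le.mp htabs))) (le_max_left _ _)
          have h2 : ‖fderiv ℝ v (sL j t x)‖ ≤ max Cv 0 :=
            le_trans (hCv _ hball) (le_max_left _ _)
          have h3 : ‖sL j t‖ ≤ 1 := sL_opNorm_le j htabs
          gcongr
  · exact intervalIntegrable_const
  · refine Filter.Eventually.of_forall (fun t ht x hx => ?_)
    have h1 : HasFDerivAt v (fderiv ℝ v (sL j t x)) (sL j t x) :=
      ((hv.differentiable one_ne_zero) _).hasFDerivAt
    have h2 : HasFDerivAt (fun y : E d => sL j t y) (sL j t) x := (sL j t).hasFDerivAt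
    exact ((w t).hasFDerivAt).comp x (h1.comp x h2)
end Shape


section ShapeCD
variable {d : ℕ}

set_option synthInstance.maxHeartbeats 1000000 in
lemma shape_contDiff (j : Fin d) : ∀ (n : ℕ) (F G : Type)
    (_ : NormedAddCommGroup F) (_ : NormedSpace ℝ F) (_ : CompleteSpace F)
    (_ : NormedAddCommGroup G) (_ : NormedSpace ℝ G) (_ : CompleteSpace G)
    (w : ℝ → (F →L[ℝ] G)), Continuous w → ∀ (v : E d → F), ContDiff ℝ n v →
    ContDiff ℝ n (fun x => ∫ t in (-1:ℝ)..1, w t (v (sL j t x))) := by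
  intro n
  induction n with
  | zero =>
    intro F G iF1 iF2 iF3 iG1 iG2 iG3 w hw v hv
    rw [show ((0:ℕ) : WithTop ℕ∞) = 0 by norm_cast, contDiff_zero]
    apply intervalIntegral.continuous_parametric_intervalIntegral_of_continuous'
    exact hw.comp continuous_snd |>.clm_apply
      ((contDiff_zero.mp (by exact_mod_cast hv)).comp
        (((continuous_sL j).comp continuous_snd).clm_apply continuous_fst))
  | succ n IH =>
    intro F G iF1 iF2 iF3 iG1 iG2 iG3 w hw v hv
    have hv1 : ContDiff ℝ 1 v := hv.of_le (by exact_mod_cast Nat.one_le_iff_ne_zero.mpr (Nat.succ_ne_zero n))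
    have hd := fun x₀ => shape_hasFDerivAt j w hw v hv1 x₀
    rw [show ((n+1:ℕ) : WithTop ℕ∞) = (n : WithTop ℕ∞) + 1 by norm_cast]
    rw [contDiff_succ_iff_fderiv]
    refine ⟨fun x => (hd x).differentiableAt, by simp, ?_⟩
    -- the weight for the derivative
    set W : ℝ → (E d →L[ℝ] F) →L[ℝ] (E d →L[ℝ] G) := fun t =>
      ((ContinuousLinearMap.compL ℝ (E d) (E d) G).flip (sL j t)).comp
        (ContinuousLinearMap.compL ℝ (E d) F G (w t)) with hWdef
    have hWcont : Continuous W := by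
      apply Continuous.clm_comp
      · exact (ContinuousLinearMap.continuous _).comp (continuous_sL j)
      · exact (ContinuousLinearMap.continuous _).comp hw
    have hv' : ContDiff ℝ n (fderiv ℝ v) := hv.fderiv_right (by exact_mod_cast le_refl (n+1))
    have hIH := IH (E d →L[ℝ] F) (E d →L[ℝ] G) inferInstance inferInstance inferInstance inferInstance inferInstance inferInstance W hWcont (fderiv ℝ v) hv'
    have heq : (fderiv ℝ fun x => ∫ t in (-1:ℝ)..1, w t (v (sL j t x)))
        = fun x => ∫ t in (-1:ℝ)..1, W t (fderiv ℝ v (sL j t x)) := by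
      funext x
      rw [(hd x).fderiv]
      apply intervalIntegral.integral_congr
      intro t _
      show (w t).comp ((fderiv ℝ v (sL j t x)).comp (sL j t)) = _
      rw [hWdef]
      simp only [ContinuousLinearMap.coe_comp', Function.comp_apply,
        ContinuousLinearMap.flip_apply, ContinuousLinearMap.compL_apply]
      rw [ContinuousLinearMap.comp_assoc]
    rw [heq]
    exact hIH
end ShapeCD

section PdBasic
variable {d : ℕ}

lemma contDiff_pd (j : Fin d) (n : ℕ) {u : E d → ℝ} (hu : ContDiff ℝ (n+1 : ℕ) u) :
    ContDiff ℝ (n : ℕ) (pd j u) := by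
  have h : ContDiff ℝ (n : ℕ) (fderiv ℝ u) :=
    hu.fderiv_right (by exact_mod_cast le_refl (n+1))
  exact h.clm_apply contDiff_const

lemma pd_continuous (j : Fin d) {u : E d → ℝ} (hu : ContDiff ℝ 1 u) :
    Continuous (pd j u) := by
  have : ContDiff ℝ ((0:ℕ) : WithTop ℕ∞) (pd j u) := contDiff_pd j 0 (by exact_mod_cast hu)
  exact (by exact_mod_cast this : ContDiff ℝ 0 (pd j u)).continuous

lemma sL_decomp (j : Fin d) (t : ℝ) (x : E d) :
    sL j t x = x - projL j x + t • projL j x := rfl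

lemma sL_one (j : Fin d) (x : E d) : sL j 1 x = x := by
  ext i; rw [sL_apply]; split <;> simp

lemma projL_smul_eV (j : Fin d) (x : E d) : projL j x = x j • eV j := by
  ext i
  rw [projL_apply]
  simp only [PiLp.smul_apply, eV, EuclideanSpace.single_apply, smul_eq_mul]
  split
  · rename_i h; subst h; simp
  · simp

lemma fderiv_apply_projL (j : Fin d) {u : E d → ℝ} (y x : E d) :
    fderiv ℝ u y (projL j x) = x j * pd j u y := by
  rw [projL_smul_eV, (fderiv ℝ u y).map_smul]
  rfl

/-- The integral representation of rho. -/
lemma rho_rep (j : Fin d) {u : E d → ℝ} (hu : ContDiff ℝ 1 u) (x : E d) :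
    rho j u x = ∫ t in (-1:ℝ)..1, pd j u (sL j t x) := by
  by_cases hx : x j = 0
  · rw [rho, if_pos hx]
    rw [intervalIntegral.integral_congr (g := fun _ => pd j u x)
      (fun t _ => by rw [sL_zero_coord j t hx])]
    rw [intervalIntegral.integral_const]
    norm_num
  · rw [rho, if_neg hx]
    have hψ : ∀ t : ℝ, HasDerivAt (fun s : ℝ => u (sL j s x))
        (x j * pd j u (sL j t x)) t := by
      intro t
      have hline : HasDerivAt (fun s : ℝ => x - projL j x + s • projL j x)
          (projL j x) t := by
        have h1 : HasDerivAt (fun s : ℝ => s • projL j x) ((1:ℝ) • projL j x) t :=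
          (hasDerivAt_id t).smul_const (projL j x)
        rw [one_smul] at h1
        exact h1.const_add _
      have key : HasDerivAt (fun s : ℝ => u (x - projL j x + s • projL j x))
          (fderiv ℝ u (sL j t x) (projL j x)) t :=
        (((hu.differentiable one_ne_zero) (sL j t x)).hasFDerivAt).comp_hasDerivAt t hline
      rw [fderiv_apply_projL] at key
      exact key
    have hcont : Continuous fun t : ℝ => x j * pd j u (sL j t x) :=
      continuous_const.mul ((pd_continuous j hu).comp
        (((continuous_sL j).clm_apply continuous_const)))
    have hftc := intervalIntegral.integral_eq_sub_of_hasDerivAt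
      (a := (-1:ℝ)) (b := (1:ℝ))
      (f := fun s : ℝ => u (sL j s x)) (f' := fun t => x j * pd j u (sL j t x))
      (fun t _ => hψ t) (hcont.intervalIntegrable _ _)
    simp only [] at hftc
    rw [sL_one, ← reflCoord_eq] at hftc
    rw [intervalIntegral.integral_const_mul] at hftc
    field_simp
    rw [← hftc]

end PdBasic


section Cors
variable {d : ℕ}

/-- weight as CLM -/
def wc (c : ℝ → ℝ) : ℝ → (ℝ →L[ℝ] ℝ) := fun t => c t • ContinuousLinearMap.id ℝ ℝ

lemma wc_cont {c : ℝ → ℝ} (hc : Continuous c) : Continuous (wc c) :=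
  hc.smul continuous_const

lemma wc_apply (c : ℝ → ℝ) (t y : ℝ) : wc c t y = c t * y := rfl

/-- C^n smoothness of weighted scaling integrals. -/
lemma contDiff_wint (j : Fin d) (n : ℕ) (c : ℝ → ℝ) (hc : Continuous c)
    {v : E d → ℝ} (hv : ContDiff ℝ (n : ℕ) v) :
    ContDiff ℝ (n : ℕ) (fun x => ∫ t in (-1:ℝ)..1, c t * v (sL j t x)) := by
  have h := shape_contDiff j n ℝ ℝ inferInstance inferInstance inferInstance
    inferInstance inferInstance inferInstance (wc c) (wc_cont hc) v hv
  exact h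

/-- partial derivative of a weighted scaling integral -/
lemma pd_wint (j i : Fin d) (c : ℝ → ℝ) (hc : Continuous c)
    {v : E d → ℝ} (hv : ContDiff ℝ 1 v) (x : E d) :
    pd i (fun y => ∫ t in (-1:ℝ)..1, c t * v (sL j t y)) x
      = ∫ t in (-1:ℝ)..1, c t * ((if i = j then t else 1) * pd i v (sL j t x)) := by
  have hfd := shape_hasFDerivAt j (wc c) (wc_cont hc) v hv x
  have hint : IntervalIntegrable
      (fun t => (wc c t).comp ((fderiv ℝ v (sL j t x)).comp (sL j t))) volume (-1:ℝ) 1 := by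
    exact ((wc_cont hc).clm_comp ((((hv.continuous_fderiv one_ne_zero).comp
      ((continuous_sL j).clm_apply continuous_const)).clm_comp
      (continuous_sL j)))).intervalIntegrable _ _
  have : pd i (fun y => ∫ t in (-1:ℝ)..1, c t * v (sL j t y)) x
      = (∫ t in (-1:ℝ)..1, (wc c t).comp ((fderiv ℝ v (sL j t x)).comp (sL j t)))
          (EuclideanSpace.single i 1) := by
    rw [pd]
    have h2 : (fun y => ∫ t in (-1:ℝ)..1, c t * v (sL j t y))
        = (fun y => ∫ t in (-1:ℝ)..1, (wc c t) (v (sL j t y))) := rfl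
    rw [h2, hfd.fderiv]
  rw [this, ContinuousLinearMap.intervalIntegral_apply hint]
  apply intervalIntegral.integral_congr
  intro t _
  simp only [ContinuousLinearMap.coe_comp', Function.comp_apply]
  rw [wc_apply]
  congr 1
  have : (EuclideanSpace.single i (1:ℝ)) = eV i := rfl
  rw [this, sL_eV]
  by_cases hij : i = j
  · rw [if_pos hij, if_pos hij, (fderiv ℝ v (sL j t x)).map_smul]
    rw [smul_eq_mul]
    rfl
  · rw [if_neg hij, if_neg hij, one_mul]
    rfl

lemma contDiff_rho (j : Fin d) (n : ℕ) {u : E d → ℝ} (hu : ContDiff ℝ (n+1 : ℕ) u) :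
    ContDiff ℝ (n : ℕ) (rho j u) := by
  have hu1 : ContDiff ℝ 1 u := hu.of_le (by exact_mod_cast Nat.one_le_iff_ne_zero.mpr (Nat.succ_ne_zero n))
  have heq : rho j u = fun x => ∫ t in (-1:ℝ)..1, (1:ℝ) * pd j u (sL j t x) := by
    funext x
    rw [rho_rep j hu1 x]
    exact intervalIntegral.integral_congr (fun t _ => by ring)
  rw [heq]
  exact contDiff_wint j n (fun _ => (1:ℝ)) continuous_const (contDiff_pd j n hu)

lemma contDiff_dunkl (γ : Fin d → ℝ) (j : Fin d) (n : ℕ) {u : E d → ℝ}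
    (hu : ContDiff ℝ (n+1 : ℕ) u) : ContDiff ℝ (n : ℕ) (dunkl γ j u) := by
  unfold dunkl
  exact (contDiff_pd j n hu).add ((contDiff_const).mul (contDiff_rho j n hu))

end Cors

section PowBasic
variable {d : ℕ}

lemma pd_add (j : Fin d) {g h : E d → ℝ} {x : E d} (hg : DifferentiableAt ℝ g x)
    (hh : DifferentiableAt ℝ h x) :
    pd j (fun y => g y + h y) x = pd j g x + pd j h x := by
  unfold pd
  rw [fderiv_fun_add hg hh]
  rfl

lemma pd_const_mul (j : Fin d) (c : ℝ) (g : E d → ℝ) (x : E d) (hg : DifferentiableAt ℝ g x) :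
    pd j (fun y => c * g y) x = c * pd j g x := by
  unfold pd
  rw [fderiv_const_mul hg]
  rfl

lemma contDiff_pdPow (j : Fin d) (m n : ℕ) {u : E d → ℝ} (hu : ContDiff ℝ (m+n : ℕ) u) :
    ContDiff ℝ (m : ℕ) (pdPow j n u) := by
  induction n generalizing m with
  | zero => exact hu
  | succ n IH =>
    show ContDiff ℝ (m : ℕ) (pd j (pdPow j n u))
    apply contDiff_pd j m
    apply IH (m+1)
    have h : m + 1 + n = m + (n+1) := by ring
    rw [h]
    exact hu

lemma pdPow_succ_eq (j : Fin d) (n : ℕ) (u : E d → ℝ) :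
    pdPow j (n+1) u = pdPow j n (pd j u) := by
  induction n with
  | zero => rfl
  | succ n IH =>
    show pd j (pdPow j (n+1) u) = pd j (pdPow j n (pd j u))
    rw [IH]

lemma pdPow_add_smul (j : Fin d) (n : ℕ) {g h : E d → ℝ} (c : ℝ)
    (hg : ContDiff ℝ (n : ℕ) g) (hh : ContDiff ℝ (n : ℕ) h) :
    ∀ x, pdPow j n (fun y => g y + c * h y) x = pdPow j n g x + c * pdPow j n h x := by
  induction n generalizing g h with
  | zero => intro x; rfl
  | succ n IH =>
    intro x
    have hg' : ContDiff ℝ (n+1 : ℕ) g := hg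
    have hh' : ContDiff ℝ (n+1 : ℕ) h := hh
    have hgn : ContDiff ℝ (n : ℕ) g := hg'.of_le (by exact_mod_cast Nat.le_succ n)
    have hhn : ContDiff ℝ (n : ℕ) h := hh'.of_le (by exact_mod_cast Nat.le_succ n)
    show pd j (pdPow j n (fun y => g y + c * h y)) x = _
    have heq : pdPow j n (fun y => g y + c * h y)
        = fun y => pdPow j n g y + c * pdPow j n h y := funext (IH hgn hhn)
    rw [heq]
    have d1 : DifferentiableAt ℝ (pdPow j n g) x := by
      have : ContDiff ℝ ((1:ℕ) : WithTop ℕ∞) (pdPow j n g) := by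
        apply contDiff_pdPow j 1 n
        have h : 1 + n = n + 1 := by ring
        rw [h]; exact hg'
      exact (this.differentiable (by norm_num)) x
    have d2 : DifferentiableAt ℝ (pdPow j n h) x := by
      have : ContDiff ℝ ((1:ℕ) : WithTop ℕ∞) (pdPow j n h) := by
        apply contDiff_pdPow j 1 n
        have h : 1 + n = n + 1 := by ring
        rw [h]; exact hh'
      exact (this.differentiable (by norm_num)) x
    rw [pd_add j d1 (d2.const_mul c), pd_const_mul j c _ x d2]
    rfl

/-- key integral formula for iterated ∂_j of rho_j -/
lemma pdPow_rho (j : Fin d) (n : ℕ) {u : E d → ℝ} (hu : ContDiff ℝ (n+1 : ℕ) u) :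
    ∀ x, pdPow j n (rho j u) x = ∫ t in (-1:ℝ)..1, t^n * pdPow j (n+1) u (sL j t x) := by
  induction n with
  | zero =>
    intro x
    have h0 := rho_rep j (by exact_mod_cast hu : ContDiff ℝ 1 u) x
    show rho j u x = _
    rw [h0]
    apply intervalIntegral.integral_congr
    intro t _
    show pd j u (sL j t x) = t^0 * pdPow j 1 u (sL j t x)
    ring_nf
    rfl
  | succ n IH =>
    intro x
    have hun : ContDiff ℝ (n+1 : ℕ) u := hu.of_le (by exact_mod_cast Nat.le_succ (n+1))
    have heq : pdPow j n (rho j u)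
        = fun y => ∫ t in (-1:ℝ)..1, t^n * pdPow j (n+1) u (sL j t y) :=
      funext (IH hun)
    show pd j (pdPow j n (rho j u)) x = _
    rw [heq]
    have hv1 : ContDiff ℝ 1 (pdPow j (n+1) u) := by
      have : ContDiff ℝ ((1:ℕ) : WithTop ℕ∞) (pdPow j (n+1) u) := by
        apply contDiff_pdPow j 1 (n+1)
        have h : 1 + (n+1) = n + 1 + 1 := by ring
        rw [h]; exact hu
      exact_mod_cast this
    rw [pd_wint j j (fun t => t^n) (by continuity) hv1 x]
    apply intervalIntegral.integral_congr
    intro t _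
    simp only [if_true]
    show t ^ n * (t * pd j (pdPow j (n+1) u) (sL j t x)) = _
    have : pd j (pdPow j (n+1) u) (sL j t x) = pdPow j (n+2) u (sL j t x) := rfl
    rw [this]
    ring

end PowBasic


section SupStuff
variable {d : ℕ}

def S {d : ℕ} (h : E d → ℝ) : ℝ := sSup ((fun y => |h y|) '' closedBall (0:E d) 1)

lemma abs_le_S {h : E d → ℝ} (hc : Continuous h) {x : E d}
    (hx : x ∈ closedBall (0:E d) 1) : |h x| ≤ S h := by
  apply le_csSup
  · exact ((isCompact_closedBall (0:E d) 1).image_of_continuousOn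
      (hc.abs.continuousOn)).bddAbove
  · exact Set.mem_image_of_mem _ hx

lemma S_nonneg {h : E d → ℝ} (hc : Continuous h) : 0 ≤ S h :=
  le_trans (abs_nonneg _) (abs_le_S hc (mem_closedBall_self zero_le_one))

lemma S_le {h : E d → ℝ} {C : ℝ} (hC : ∀ x ∈ closedBall (0:E d) 1, |h x| ≤ C) :
    S h ≤ C := by
  apply csSup_le
  · exact ⟨|h 0|, Set.mem_image_of_mem _ (mem_closedBall_self zero_le_one)⟩
  · rintro r ⟨y, hy, rfl⟩
    exact hC y hy

lemma dunklPow_succ_eq (γ : Fin d → ℝ) (j : Fin d) (n : ℕ) (u : E d → ℝ) :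
    dunklPow γ j (n+1) u = dunklPow γ j n (dunkl γ j u) := by
  induction n with
  | zero => rfl
  | succ n IH =>
    show dunkl γ j (dunklPow γ j (n+1) u) = dunkl γ j (dunklPow γ j n (dunkl γ j u))
    rw [IH]

lemma contDiff_dunklPow (γ : Fin d → ℝ) (j : Fin d) (m n : ℕ) {u : E d → ℝ}
    (hu : ContDiff ℝ (m+n : ℕ) u) : ContDiff ℝ (m : ℕ) (dunklPow γ j n u) := by
  induction n generalizing m with
  | zero => exact hu
  | succ n IH =>
    show ContDiff ℝ (m : ℕ) (dunkl γ j (dunklPow γ j n u))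
    apply contDiff_dunkl γ j m
    apply IH (m+1)
    have h : m + 1 + n = m + (n+1) := by ring
    rw [h]; exact hu

/-- single-coordinate master bound -/
lemma dunklPow_bound (γ : Fin d → ℝ) (j : Fin d) (n : ℕ) :
    ∀ {u : E d → ℝ}, ContDiff ℝ (n : ℕ) u →
    ∀ x ∈ closedBall (0:E d) 1, |dunklPow γ j n u x| ≤ (1+|γ j|)^n * S (pdPow j n u) := by
  induction n with
  | zero =>
    intro u hu x hx
    simpa [dunklPow, pdPow] using abs_le_S hu.continuous hx
  | succ n IH =>
    intro u hu x hx
    have hun : ContDiff ℝ (n : ℕ) (dunkl γ j u) := contDiff_dunkl γ j n hu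
    have key : |dunklPow γ j (n+1) u x| ≤ (1+|γ j|)^n * S (pdPow j n (dunkl γ j u)) := by
      rw [dunklPow_succ_eq]
      exact IH hun x hx
    have hSle : S (pdPow j n (dunkl γ j u)) ≤ (1+|γ j|) * S (pdPow j (n+1) u) := by
      have hcont1 : Continuous (pdPow j (n+1) u) := by
        have : ContDiff ℝ ((0:ℕ) : WithTop ℕ∞) (pdPow j (n+1) u) := by
          apply contDiff_pdPow j 0 (n+1)
          have h : 0 + (n+1) = n + 1 := by ring
          rw [h]; exact hu
        exact this.continuous
      have hS1 : 0 ≤ S (pdPow j (n+1) u) := S_nonneg hcont1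
      apply S_le
      intro y hy
      have hsplit : pdPow j n (dunkl γ j u) y
          = pdPow j n (pd j u) y + (γ j / 2) * pdPow j n (rho j u) y := by
        have : dunkl γ j u = fun z => pd j u z + (γ j / 2) * rho j u z := rfl
        rw [this]
        exact pdPow_add_smul j n (γ j / 2) (contDiff_pd j n hu) (contDiff_rho j n hu) y
      rw [hsplit]
      have hterm1 : |pdPow j n (pd j u) y| ≤ S (pdPow j (n+1) u) := by
        rw [← pdPow_succ_eq]
        exact abs_le_S hcont1 hy
      have hterm2 : |pdPow j n (rho j u) y| ≤ 2 * S (pdPow j (n+1) u) := by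
        rw [pdPow_rho j n hu y]
        have := intervalIntegral.norm_integral_le_of_norm_le_const
          (a := (-1:ℝ)) (b := 1) (C := S (pdPow j (n+1) u))
          (f := fun t => t^n * pdPow j (n+1) u (sL j t y)) ?_
        · rw [Real.norm_eq_abs] at this
          calc |∫ t in (-1:ℝ)..1, t^n * pdPow j (n+1) u (sL j t y)|
              ≤ S (pdPow j (n+1) u) * |1 - (-1:ℝ)| := this
            _ = 2 * S (pdPow j (n+1) u) := by norm_num; ring
        · intro t ht
          have htabs : |t| ≤ 1 := uIoc_abs ht
          rw [Real.norm_eq_abs, abs_mul, abs_pow]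
          calc |t|^n * |pdPow j (n+1) u (sL j t y)|
              ≤ 1^n * S (pdPow j (n+1) u) := by
                apply mul_le_mul (pow_le_pow_left₀ (abs_nonneg t) htabs n)
                  (abs_le_S hcont1 (sL_mem_closedBall j htabs hy)) (abs_nonneg _)
                  (by positivity)
            _ = S (pdPow j (n+1) u) := by ring
      calc |pdPow j n (pd j u) y + (γ j / 2) * pdPow j n (rho j u) y|
          ≤ |pdPow j n (pd j u) y| + |γ j / 2| * |pdPow j n (rho j u) y| := by
            refine le_trans (abs_add_le _ _) ?_
            rw [abs_mul]
        _ ≤ S (pdPow j (n+1) u) + |γ j|/2 * (2 * S (pdPow j (n+1) u)) := by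
            rw [abs_div, abs_two]
            exact add_le_add hterm1 (mul_le_mul_of_nonneg_left hterm2 (by positivity))
        _ = (1+|γ j|) * S (pdPow j (n+1) u) := by ring
    calc |dunklPow γ j (n+1) u x|
        ≤ (1+|γ j|)^n * S (pdPow j n (dunkl γ j u)) := key
      _ ≤ (1+|γ j|)^n * ((1+|γ j|) * S (pdPow j (n+1) u)) := by
          apply mul_le_mul_of_nonneg_left hSle (by positivity)
      _ = (1+|γ j|)^(n+1) * S (pdPow j (n+1) u) := by ring

end SupStuff


section Comm
variable {d : ℕ}

lemma pd_pd_comm (i j : Fin d) {u : E d → ℝ} (hu : ContDiff ℝ 2 u) (x : E d) :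
    pd i (pd j u) x = pd j (pd i u) x := by
  have hfd : ContDiff ℝ 1 (fderiv ℝ u) := hu.fderiv_right (by norm_num)
  have hdiff : DifferentiableAt ℝ (fderiv ℝ u) x := (hfd.differentiable one_ne_zero) x
  have key : ∀ (v : E d), fderiv ℝ (fun y => fderiv ℝ u y v) x
      = (fderiv ℝ (fderiv ℝ u) x).flip v := by
    intro v
    rw [fderiv_clm_apply hdiff (differentiableAt_const v)]
    simp
  have hsymm : IsSymmSndFDerivAt ℝ u x :=
    hu.contDiffAt.isSymmSndFDerivAt (by simp)
  show fderiv ℝ (fun y => fderiv ℝ u y (EuclideanSpace.single j 1)) x (EuclideanSpace.single i 1)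
      = fderiv ℝ (fun y => fderiv ℝ u y (EuclideanSpace.single i 1)) x (EuclideanSpace.single j 1)
  rw [key, key]
  simp only [ContinuousLinearMap.flip_apply]
  exact hsymm _ _

lemma pd_rho_comm (i j : Fin d) (hij : j ≠ i) {u : E d → ℝ} (hu : ContDiff ℝ 2 u) (x : E d) :
    pd j (rho i u) x = rho i (pd j u) x := by
  have hu1 : ContDiff ℝ 1 u := hu.of_le (by norm_num)
  have hpdi : ContDiff ℝ 1 (pd i u) := by
    have : ContDiff ℝ ((1:ℕ) : WithTop ℕ∞) (pd i u) := contDiff_pd i 1 (by exact_mod_cast hu)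
    exact_mod_cast this
  have hpdj : ContDiff ℝ 1 (pd j u) := by
    have : ContDiff ℝ ((1:ℕ) : WithTop ℕ∞) (pd j u) := contDiff_pd j 1 (by exact_mod_cast hu)
    exact_mod_cast this
  have heq : rho i u = fun y => ∫ t in (-1:ℝ)..1, (1:ℝ) * pd i u (sL i t y) := by
    funext y
    rw [rho_rep i hu1 y]
    exact intervalIntegral.integral_congr (fun t _ => by ring)
  rw [heq, pd_wint i j (fun _ => (1:ℝ)) continuous_const hpdi x]
  rw [rho_rep i hpdj x]
  apply intervalIntegral.integral_congr
  intro t _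
  simp only [if_neg hij, one_mul]
  exact pd_pd_comm j i hu (sL i t x)

lemma pd_dunkl_comm (γ : Fin d → ℝ) (i j : Fin d) (hij : j ≠ i) {u : E d → ℝ}
    (hu : ContDiff ℝ 2 u) (x : E d) :
    pd j (dunkl γ i u) x = dunkl γ i (pd j u) x := by
  have hpdi : ContDiff ℝ ((1:ℕ) : WithTop ℕ∞) (pd i u) := contDiff_pd i 1 (by exact_mod_cast hu)
  have hrhoi : ContDiff ℝ ((1:ℕ) : WithTop ℕ∞) (rho i u) := contDiff_rho i 1 (by exact_mod_cast hu)
  have h1 : dunkl γ i u = fun z => pd i u z + (γ i / 2) * rho i u z := rfl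
  rw [h1]
  rw [pd_add j ((hpdi.differentiable (by norm_num)) x)
    (((hrhoi.differentiable (by norm_num)) x).const_mul _)]
  rw [pd_const_mul j _ _ x ((hrhoi.differentiable (by norm_num)) x)]
  rw [pd_pd_comm j i hu x, pd_rho_comm i j hij hu x]
  rfl

lemma pdPow_dunkl_comm (γ : Fin d → ℝ) (i j : Fin d) (hij : j ≠ i) (m : ℕ) :
    ∀ {u : E d → ℝ}, ContDiff ℝ (m+1 : ℕ) u →
    ∀ x, pdPow j m (dunkl γ i u) x = dunkl γ i (pdPow j m u) x := by
  induction m with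
  | zero => intro u _ x; rfl
  | succ m IH =>
    intro u hu x
    have hum : ContDiff ℝ (m+1 : ℕ) u := hu.of_le (by exact_mod_cast Nat.le_succ (m+1))
    have heq : pdPow j m (dunkl γ i u) = fun y => dunkl γ i (pdPow j m u) y :=
      funext (IH hum)
    show pd j (pdPow j m (dunkl γ i u)) x = _
    rw [heq]
    have h2 : ContDiff ℝ 2 (pdPow j m u) := by
      have : ContDiff ℝ ((2:ℕ) : WithTop ℕ∞) (pdPow j m u) := by
        apply contDiff_pdPow j 2 m
        have h : 2 + m = m + 1 + 1 := by ring
        rw [h]; exact hu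
      exact_mod_cast this
    exact pd_dunkl_comm γ i j hij h2 x

lemma pd_pdPow_comm (i j : Fin d) (k : ℕ) :
    ∀ {u : E d → ℝ}, ContDiff ℝ (k+1 : ℕ) u →
    ∀ x, pd j (pdPow i k u) x = pdPow i k (pd j u) x := by
  induction k with
  | zero => intro u _ x; rfl
  | succ k IH =>
    intro u hu x
    have h2 : ContDiff ℝ 2 (pdPow i k u) := by
      have : ContDiff ℝ ((2:ℕ) : WithTop ℕ∞) (pdPow i k u) := by
        apply contDiff_pdPow i 2 k
        have h : 2 + k = k + 1 + 1 := by ring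
        rw [h]; exact hu
      exact_mod_cast this
    have huk : ContDiff ℝ (k+1 : ℕ) u := hu.of_le (by exact_mod_cast Nat.le_succ (k+1))
    show pd j (pd i (pdPow i k u)) x = _
    rw [pd_pd_comm j i h2 x]
    have heq : pd j (pdPow i k u) = fun y => pdPow i k (pd j u) y := funext (IH huk)
    rw [heq]
    rfl

lemma pdPow_pdPow_comm (i j : Fin d) (m k : ℕ) :
    ∀ {u : E d → ℝ}, ContDiff ℝ (m+k : ℕ) u →
    ∀ x, pdPow j m (pdPow i k u) x = pdPow i k (pdPow j m u) x := by
  induction m with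
  | zero => intro u _ x; rfl
  | succ m IH =>
    intro u hu x
    have hmk : ContDiff ℝ (m+k : ℕ) u := hu.of_le (by
      exact_mod_cast (by omega : m + k ≤ m + 1 + k))
    show pd j (pdPow j m (pdPow i k u)) x = _
    have heq : pdPow j m (pdPow i k u) = fun y => pdPow i k (pdPow j m u) y :=
      funext (IH hmk)
    rw [heq]
    have hk1 : ContDiff ℝ (k+1 : ℕ) (pdPow j m u) := by
      have : ContDiff ℝ (((k+1):ℕ) : WithTop ℕ∞) (pdPow j m u) := by
        apply contDiff_pdPow j (k+1) m
        have h : k + 1 + m = m + 1 + k := by ring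
        rw [h]; exact hu
      exact_mod_cast this
    have := pd_pdPow_comm i j k hk1 x
    show pd j (fun y => pdPow i k (pdPow j m u) y) x = pdPow i k (pdPow j (m+1) u) x
    rw [show (fun y => pdPow i k (pdPow j m u) y) = pdPow i k (pdPow j m u) from rfl]
    rw [this]
    have heq2 : pd j (pdPow j m u) = pdPow j (m+1) u := rfl
    rw [heq2]

lemma pdPow_dunklPow_comm (γ : Fin d → ℝ) (i j : Fin d) (hij : j ≠ i) (m k : ℕ) :
    ∀ {u : E d → ℝ}, ContDiff ℝ (m+k : ℕ) u →
    ∀ x, pdPow j m (dunklPow γ i k u) x = dunklPow γ i k (pdPow j m u) x := by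
  induction k with
  | zero => intro u _ x; rfl
  | succ k IH =>
    intro u hu x
    have hc1 : ContDiff ℝ (m+1 : ℕ) (dunklPow γ i k u) := by
      have : ContDiff ℝ (((m+1):ℕ) : WithTop ℕ∞) (dunklPow γ i k u) := by
        apply contDiff_dunklPow γ i (m+1) k
        have h : m + 1 + k = m + (k+1) := by ring
        rw [h]; exact hu
      exact_mod_cast this
    have hmk : ContDiff ℝ (m+k : ℕ) u := hu.of_le
      (by exact_mod_cast Nat.add_le_add_left (Nat.le_succ k) m)
    show pdPow j m (dunkl γ i (dunklPow γ i k u)) x = _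
    rw [pdPow_dunkl_comm γ i j hij m hc1 x]
    have heq : pdPow j m (dunklPow γ i k u) = fun y => dunklPow γ i k (pdPow j m u) y :=
      funext (IH hmk)
    rw [heq]
    rfl

end Comm

section Fold
variable {d : ℕ} (γ : Fin d → ℝ) (a : Fin d → ℕ)

def dfold (L : List (Fin d)) (u : E d → ℝ) : E d → ℝ :=
  L.foldr (fun j g => dunklPow γ j (a j) g) u

def pfold (L : List (Fin d)) (u : E d → ℝ) : E d → ℝ :=
  L.foldr (fun j g => pdPow j (a j) g) u

lemma contDiff_dfold : ∀ (L : List (Fin d)) (m : ℕ) {u : E d → ℝ},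
    ContDiff ℝ ((m + (L.map a).sum : ℕ)) u → ContDiff ℝ (m : ℕ) (dfold γ a L u) := by
  intro L
  induction L with
  | nil => intro m u hu; exact (by simpa [dfold] using hu)
  | cons j L' IH =>
    intro m u hu
    show ContDiff ℝ (m : ℕ) (dunklPow γ j (a j) (dfold γ a L' u))
    apply contDiff_dunklPow γ j m (a j)
    apply IH (m + a j)
    have h : m + a j + (L'.map a).sum = m + ((j :: L').map a).sum := by
      simp [List.map_cons, List.sum_cons]; ring
    rw [h]; exact hu

lemma contDiff_pfold : ∀ (L : List (Fin d)) (m : ℕ) {u : E d → ℝ},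
    ContDiff ℝ ((m + (L.map a).sum : ℕ)) u → ContDiff ℝ (m : ℕ) (pfold a L u) := by
  intro L
  induction L with
  | nil => intro m u hu; exact (by simpa [pfold] using hu)
  | cons j L' IH =>
    intro m u hu
    show ContDiff ℝ (m : ℕ) (pdPow j (a j) (pfold a L' u))
    apply contDiff_pdPow j m (a j)
    apply IH (m + a j)
    have h : m + a j + (L'.map a).sum = m + ((j :: L').map a).sum := by
      simp [List.map_cons, List.sum_cons]; ring
    rw [h]; exact hu

lemma pdPow_dfold_comm : ∀ (L : List (Fin d)) (j : Fin d) (_ : j ∉ L) (m : ℕ)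
    {u : E d → ℝ}, ContDiff ℝ ((m + (L.map a).sum : ℕ)) u →
    ∀ x, pdPow j m (dfold γ a L u) x = dfold γ a L (pdPow j m u) x := by
  intro L
  induction L with
  | nil => intro j _ m u _ x; rfl
  | cons i L' IH =>
    intro j hj m u hu x
    have hji : j ≠ i := fun h => hj (h ▸ (List.mem_cons_self : i ∈ i :: L'))
    have hjL' : j ∉ L' := fun h => hj (List.mem_cons_of_mem i h)
    have hbud : ContDiff ℝ ((m + a i) + (L'.map a).sum : ℕ) u := by
      have h : (m + a i) + (L'.map a).sum = m + ((i :: L').map a).sum := by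
        simp [List.map_cons, List.sum_cons]; ring
      rw [h]; exact hu
    have hin : ContDiff ℝ (m + a i : ℕ) (dfold γ a L' u) :=
      contDiff_dfold γ a L' (m + a i) hbud
    show pdPow j m (dunklPow γ i (a i) (dfold γ a L' u)) x = _
    rw [pdPow_dunklPow_comm γ i j hji m (a i) hin x]
    have hbud2 : ContDiff ℝ (m + (L'.map a).sum : ℕ) u := hu.of_le (by
      have h : m + (L'.map a).sum ≤ m + ((i :: L').map a).sum := by
        have h2 : ((i :: L').map a).sum = a i + (L'.map a).sum := by simp
        omega
      exact_mod_cast h)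
    have heq : pdPow j m (dfold γ a L' u) = fun y => dfold γ a L' (pdPow j m u) y :=
      funext (IH j hjL' m hbud2)
    rw [heq]
    rfl

lemma pdPow_pfold_comm : ∀ (L : List (Fin d)) (j : Fin d) (m : ℕ)
    {u : E d → ℝ}, ContDiff ℝ ((m + (L.map a).sum : ℕ)) u →
    ∀ x, pdPow j m (pfold a L u) x = pfold a L (pdPow j m u) x := by
  intro L
  induction L with
  | nil => intro j m u _ x; rfl
  | cons i L' IH =>
    intro j m u hu x
    have hbud : ContDiff ℝ ((m + a i) + (L'.map a).sum : ℕ) u := by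
      have h : (m + a i) + (L'.map a).sum = m + ((i :: L').map a).sum := by
        simp [List.map_cons, List.sum_cons]; ring
      rw [h]; exact hu
    have hin : ContDiff ℝ (m + a i : ℕ) (pfold a L' u) :=
      contDiff_pfold a L' (m + a i) hbud
    show pdPow j m (pdPow i (a i) (pfold a L' u)) x = _
    rw [pdPow_pdPow_comm i j m (a i) hin x]
    have hbud2 : ContDiff ℝ (m + (L'.map a).sum : ℕ) u := hu.of_le (by
      have h : m + (L'.map a).sum ≤ m + ((i :: L').map a).sum := by
        have h2 : ((i :: L').map a).sum = a i + (L'.map a).sum := by simp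
        omega
      exact_mod_cast h)
    have heq : pdPow j m (pfold a L' u) = fun y => pfold a L' (pdPow j m u) y :=
      funext (IH j m hbud2)
    rw [heq]
    rfl

lemma dfold_bound : ∀ (L : List (Fin d)) (_ : L.Nodup) {u : E d → ℝ},
    ContDiff ℝ (((L.map a).sum : ℕ)) u →
    ∀ x ∈ closedBall (0:E d) 1,
      |dfold γ a L u x| ≤ ((L.map (fun j => (1+|γ j|)^(a j))).prod) * S (pfold a L u) := by
  intro L
  induction L with
  | nil =>
    intro _ u hu x hx
    simpa [dfold, pfold] using abs_le_S hu.continuous hx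
  | cons j L' IH =>
    intro hnd u hu x hx
    obtain ⟨hjL', hnd'⟩ := List.nodup_cons.mp hnd
    have hbudG : ContDiff ℝ (a j + (L'.map a).sum : ℕ) u := by
      have h : a j + (L'.map a).sum = ((j :: L').map a).sum := by
        simp [List.map_cons, List.sum_cons]
      rw [h]; exact hu
    have hG : ContDiff ℝ (a j : ℕ) (dfold γ a L' u) :=
      contDiff_dfold γ a L' (a j) hbudG
    have step1 := dunklPow_bound γ j (a j) hG x hx
    have hu' : ContDiff ℝ (((L'.map a).sum) : ℕ) (pdPow j (a j) u) := by
      apply contDiff_pdPow j ((L'.map a).sum) (a j)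
      have h : (L'.map a).sum + a j = a j + (L'.map a).sum := by ring
      rw [h]; exact hbudG
    have hSeq : pfold a L' (pdPow j (a j) u) = pdPow j (a j) (pfold a L' u) := by
      funext y
      exact (pdPow_pfold_comm a L' j (a j) hbudG y).symm
    have hS2 : S (pdPow j (a j) (dfold γ a L' u))
        ≤ ((L'.map (fun i => (1+|γ i|)^(a i))).prod) * S (pfold a (j :: L') u) := by
      apply S_le
      intro y hy
      have hcomm := pdPow_dfold_comm γ a L' j hjL' (a j) hbudG y
      rw [hcomm]
      have hIH := IH hnd' hu' y hy
      calc |dfold γ a L' (pdPow j (a j) u) y|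
          ≤ ((L'.map (fun i => (1+|γ i|)^(a i))).prod) * S (pfold a L' (pdPow j (a j) u)) := hIH
        _ = ((L'.map (fun i => (1+|γ i|)^(a i))).prod) * S (pfold a (j :: L') u) := by
            rw [hSeq]
            rfl
    calc |dfold γ a (j :: L') u x|
        = |dunklPow γ j (a j) (dfold γ a L' u) x| := rfl
      _ ≤ (1+|γ j|)^(a j) * S (pdPow j (a j) (dfold γ a L' u)) := step1
      _ ≤ (1+|γ j|)^(a j) * (((L'.map (fun i => (1+|γ i|)^(a i))).prod) * S (pfold a (j :: L') u)) := by
          apply mul_le_mul_of_nonneg_left hS2 (by positivity)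
      _ = (((j :: L').map (fun i => (1+|γ i|)^(a i))).prod) * S (pfold a (j :: L') u) := by
          simp [List.map_cons, List.prod_cons]; ring

end Fold

theorem stmt5 (d : ℕ) (γ : Fin d → ℝ) (a : Fin d → ℕ) (f : E d → ℝ)
    (hf : ContDiff ℝ ((∑ i, a i : ℕ) : ℕ∞) f) :
    ∀ x ∈ closedBall (0 : E d) 1,
      |dunklMulti γ a f x| ≤ (∏ i, (1 + |γ i|) ^ a i) *
        sSup ((fun y => |pdMulti a f y|) '' closedBall (0 : E d) 1) := by
  intro x hx
  have hsum : (((List.finRange d).map a).sum) = ∑ i, a i := by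
    rw [← List.ofFn_eq_map]
    exact Fin.sum_ofFn a
  have hprod : (((List.finRange d).map (fun j => (1+|γ j|)^(a j))).prod)
      = ∏ i, (1 + |γ i|) ^ a i := by
    rw [← List.ofFn_eq_map]
    exact Fin.prod_ofFn _
  have hf' : ContDiff ℝ ((((List.finRange d).map a).sum : ℕ)) f := by
    rw [hsum]
    exact_mod_cast hf
  have key := dfold_bound γ a (List.finRange d) (List.nodup_finRange d) hf' x hx
  rw [hprod] at key
  exact key
end
end

section
/- Let α > -1 and γ ∈ (-1,∞)^d. The weight W_{α,γ}(x) = (1-‖x‖²)^α ∏_{i=1}^d |x_i|^{γ_i} is integrable over the unit ball B^d, with ∫_{B^d} W_{α,γ}(x) dx = [∏_{i=1}^d Γ((γ_i+1)/2) / Γ((d+Σγ_i)/2)] · B((d+Σ_i γ_i)/2, α+1), where B is the Beta function. -/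
open MeasureTheory Metric

noncomputable section

section auxStmt6
open Set intervalIntegral

lemma beta_integrable {p q : ℝ} (hp : -1 < p) (hq : -1 < q) :
    IntervalIntegrable (fun x : ℝ => x ^ p * (1 - x) ^ q) volume 0 1 := by
  have h1 : IntervalIntegrable (fun x : ℝ => x ^ p * (1 - x) ^ q) volume 0 (1/2) := by
    apply (intervalIntegrable_rpow' hp (a := 0) (b := 1/2)).mul_continuousOn
    intro x hx
    rw [Set.uIcc_of_le (by norm_num)] at hx
    exact ((continuousAt_const.sub continuousAt_id).rpow_const
      (Or.inl (fun h => by simp only [Pi.sub_apply, Pi.add_apply, Pi.pow_apply, id_eq] at h; nlinarith [hx.2]))).continuousWithinAt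
  have h2 : IntervalIntegrable (fun x : ℝ => x ^ p * (1 - x) ^ q) volume (1/2) 1 := by
    have hb : IntervalIntegrable (fun x : ℝ => (1 - x) ^ q) volume (1/2) 1 := by
      have := (intervalIntegrable_rpow' hq (a := 0) (b := 1/2)).comp_sub_left 1
      norm_num at this
      exact this.symm
    have := hb.continuousOn_mul (g := fun x : ℝ => x ^ p) ?_
    · exact this.congr (fun x _ => by beta_reduce; ring)
    · intro x hx
      rw [Set.uIcc_of_le (by norm_num)] at hx
      exact ((continuousAt_id).rpow_const (Or.inl (fun h => by simp only [id_eq] at h; nlinarith [hx.1]))).continuousWithinAt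
  exact h1.trans h2

lemma beta_value {u v : ℝ} (hu : 0 < u) (hv : 0 < v) :
    ∫ x in (0:ℝ)..1, x ^ (u - 1) * (1 - x) ^ (v - 1) =
      Real.Gamma u * Real.Gamma v / Real.Gamma (u + v) := by
  have key : Complex.betaIntegral u v =
      ((∫ x in (0:ℝ)..1, x ^ (u - 1) * (1 - x) ^ (v - 1)) : ℝ) := by
    rw [Complex.betaIntegral, ← intervalIntegral.integral_ofReal]
    apply intervalIntegral.integral_congr
    intro x hx
    rw [Set.uIcc_of_le (by norm_num)] at hx
    push_cast [Complex.ofReal_cpow hx.1, Complex.ofReal_cpow (sub_nonneg.2 hx.2)]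
    ring
  have h := Complex.Gamma_mul_Gamma_eq_betaIntegral
    (s := (u : ℂ)) (t := (v : ℂ)) (by simpa using hu) (by simpa using hv)
  rw [key] at h
  have h2 : Real.Gamma u * Real.Gamma v =
      Real.Gamma (u + v) * ∫ x in (0:ℝ)..1, x ^ (u - 1) * (1 - x) ^ (v - 1) := by
    have := h
    rw [Complex.Gamma_ofReal, Complex.Gamma_ofReal] at this
    rw [show ((u : ℂ) + v) = ((u + v : ℝ) : ℂ) by push_cast; ring,
      Complex.Gamma_ofReal] at this
    exact_mod_cast this
  have hG : Real.Gamma (u + v) ≠ 0 := (Real.Gamma_pos_of_pos (by linarith)).ne'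
  field_simp at h2 ⊢
  linarith [h2]

lemma iiCongr {f g : ℝ → ℝ} {a b : ℝ} (h : ∀ x ∈ Set.uIoc a b, f x = g x)
    (hf : IntervalIntegrable f volume a b) : IntervalIntegrable g volume a b := by
  rw [intervalIntegrable_iff] at hf ⊢
  exact hf.congr_fun h measurableSet_uIoc

lemma oneDim_int_right {γ α : ℝ} (hγ : -1 < γ) (hα : -1 < α) :
    IntervalIntegrable (fun u : ℝ => |u| ^ γ * (1 - u ^ 2) ^ α) volume 0 1 := by
  have h1 : IntervalIntegrable (fun u : ℝ => |u| ^ γ * (1 - u ^ 2) ^ α) volume 0 (1/2) := by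
    have base : IntervalIntegrable (fun u : ℝ => u ^ γ * (1 - u ^ 2) ^ α) volume 0 (1/2) := by
      apply (intervalIntegrable_rpow' hγ (a := 0) (b := 1/2)).mul_continuousOn
      intro x hx
      rw [Set.uIcc_of_le (by norm_num)] at hx
      exact ((continuousAt_const.sub (continuousAt_id.pow 2)).rpow_const
        (Or.inl (fun h => by simp only [Pi.sub_apply, Pi.add_apply, Pi.pow_apply, id_eq] at h; nlinarith [hx.1, hx.2]))).continuousWithinAt
    apply iiCongr _ base
    intro x hx
    rw [Set.uIoc_of_le (by norm_num)] at hx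
    rw [abs_of_pos hx.1]
  have h2 : IntervalIntegrable (fun u : ℝ => |u| ^ γ * (1 - u ^ 2) ^ α) volume (1/2) 1 := by
    have hb : IntervalIntegrable (fun x : ℝ => (1 - x) ^ α) volume (1/2) 1 := by
      have := (intervalIntegrable_rpow' hα (a := 0) (b := 1/2)).comp_sub_left 1
      norm_num at this
      exact this.symm
    have base := hb.mul_continuousOn (g := fun x : ℝ => |x| ^ γ * (1 + x) ^ α) ?_
    · apply iiCongr _ base
      intro x hx
      rw [Set.uIoc_of_le (by norm_num)] at hx
      rw [show (1:ℝ) - x ^ 2 = (1 - x) * (1 + x) by ring,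
        Real.mul_rpow (by linarith [hx.2]) (by linarith [hx.1])]
      ring
    · intro x hx
      rw [Set.uIcc_of_le (by norm_num)] at hx
      apply ContinuousWithinAt.mul
      · exact ((continuous_abs.continuousAt).rpow_const
          (Or.inl (fun h => by rw [abs_eq_zero] at h; rw [h] at hx; exact absurd hx.1 (by norm_num)))).continuousWithinAt
      · exact ((continuousAt_const.add continuousAt_id).rpow_const
          (Or.inl (fun h => by simp only [Pi.sub_apply, Pi.add_apply, Pi.pow_apply, id_eq] at h; nlinarith [hx.1]))).continuousWithinAt
  exact h1.trans h2

lemma oneDim_int {γ α : ℝ} (hγ : -1 < γ) (hα : -1 < α) :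
    IntervalIntegrable (fun u : ℝ => |u| ^ γ * (1 - u ^ 2) ^ α) volume (-1) 1 := by
  have h0 := oneDim_int_right hγ hα
  have hneg : IntervalIntegrable (fun u : ℝ => |u| ^ γ * (1 - u ^ 2) ^ α) volume (-1) 0 := by
    have := (h0.comp_mul_left (c := -1)).symm
    norm_num at this
    apply iiCongr _ this
    intro x _
    simp [neg_sq]
  exact hneg.trans h0

lemma oneDim_val {γ α : ℝ} (hγ : -1 < γ) (hα : -1 < α) :
    ∫ u in (-1:ℝ)..1, |u| ^ γ * (1 - u ^ 2) ^ α =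
      Real.Gamma ((γ + 1) / 2) * Real.Gamma (α + 1) /
        Real.Gamma ((γ + 1) / 2 + (α + 1)) := by
  set f : ℝ → ℝ := fun u => |u| ^ γ * (1 - u ^ 2) ^ α with hfdef
  set g : ℝ → ℝ := fun v => v ^ ((γ + 1) / 2 - 1) * (1 - v) ^ ((α + 1) - 1) with hgdef
  have hu0 : (0:ℝ) < (γ + 1) / 2 := by linarith
  have hv0 : (0:ℝ) < α + 1 := by linarith
  have hgint : IntervalIntegrable g volume 0 1 :=
    beta_integrable (by linarith) (by linarith)
  have hf0 := oneDim_int_right hγ hα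
  have hfneg : IntervalIntegrable f volume (-1) 0 := by
    have := (hf0.comp_mul_left (c := -1)).symm
    norm_num at this
    exact iiCongr (fun x _ => by simp [hfdef, neg_sq]) this
  -- substitution: ∫_0^1 2x g(x^2) dx = ∫_0^1 g
  have hsub : (∫ x in (0:ℝ)..1, (2 * x) • g (x ^ 2)) = ∫ v in (0:ℝ)..1, g v := by
    have h := integral_comp_smul_deriv''' (a := 0) (b := 1) (f := fun x : ℝ => x ^ 2)
      (f' := fun x : ℝ => 2 * x) (g := g) ?_ ?_ ?_ ?_ ?_
    · simpa using h
    · exact (continuous_pow 2).continuousOn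
    · intro x hx
      have := hasDerivAt_pow 2 x
      norm_num at this
      exact this.hasDerivWithinAt
    · -- continuity of g on image of Ioo
      have himg : ((fun x : ℝ => x ^ 2) '' Set.Ioo (min 0 1) (max 0 1)) ⊆ Set.Ioo 0 1 := by
        rintro v ⟨x, hx, rfl⟩
        rw [min_eq_left (by norm_num), max_eq_right (by norm_num)] at hx
        show x ^ 2 ∈ Set.Ioo (0:ℝ) 1
        constructor
        · nlinarith [hx.1, hx.2]
        · nlinarith [hx.1, hx.2]
      refine ContinuousOn.mono ?_ himg
      intro v hv
      apply ContinuousWithinAt.mul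
      · exact (continuousAt_id.rpow_const (Or.inl (by simp; linarith [hv.1]))).continuousWithinAt
      · exact ((continuousAt_const.sub continuousAt_id).rpow_const
          (Or.inl (fun h => by simp only [Pi.sub_apply, Pi.add_apply, Pi.pow_apply, id_eq] at h; nlinarith [hv.2]))).continuousWithinAt
    · -- integrability of g on image of uIcc
      have himg : ((fun x : ℝ => x ^ 2) '' (Set.uIcc (0:ℝ) 1)) ⊆ Set.Icc 0 1 := by
        rintro v ⟨x, hx, rfl⟩
        rw [Set.uIcc_of_le (by norm_num)] at hx
        show x ^ 2 ∈ Set.Icc (0:ℝ) 1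
        constructor
        · positivity
        · nlinarith [hx.1, hx.2]
      exact ((intervalIntegrable_iff_integrableOn_Icc_of_le (by norm_num)).1 hgint).mono_set himg
    · -- integrability of x ↦ 2x g(x²) on [[0,1]]
      rw [Set.uIcc_of_le (by norm_num), integrableOn_Icc_iff_integrableOn_Ioc]
      have h2f : IntervalIntegrable (fun x => 2 * f x) volume 0 1 := hf0.const_mul 2
      rw [intervalIntegrable_iff, Set.uIoc_of_le (by norm_num)] at h2f
      apply h2f.congr_fun _ measurableSet_Ioc
      intro x hx
      show 2 * f x = (2 * x) • g (x ^ 2)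
      have hx0 : (0:ℝ) < x := hx.1
      simp only [hfdef, hgdef, smul_eq_mul]
      rw [show (x:ℝ) ^ 2 = x ^ ((2:ℕ):ℝ) by rw [Real.rpow_natCast],
        ← Real.rpow_mul hx0.le]
      rw [show ((2:ℕ):ℝ) * ((γ + 1) / 2 - 1) = γ - 1 by push_cast; ring]
      rw [show (1:ℝ) - x ^ ((2:ℕ):ℝ) = 1 - x ^ 2 by rw [Real.rpow_natCast]]
      rw [abs_of_pos hx0]
      rw [show ((α:ℝ) + 1) - 1 = α by ring]
      have hxx : x * x ^ (γ - 1) = x ^ γ := by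
        have h' := Real.rpow_add hx0 1 (γ - 1)
        rw [Real.rpow_one, show (1:ℝ) + (γ - 1) = γ by ring] at h'
        exact h'.symm
      rw [← hxx]; ring
  -- LHS of substitution equals 2 ∫ f
  have hlhs : (∫ x in (0:ℝ)..1, (2 * x) • g (x ^ 2)) = 2 * ∫ u in (0:ℝ)..1, f u := by
    rw [← intervalIntegral.integral_const_mul]
    apply intervalIntegral.integral_congr_ae
    apply Filter.Eventually.of_forall
    intro x hx
    rw [Set.uIoc_of_le (by norm_num)] at hx
    have hx0 : (0:ℝ) < x := hx.1
    simp only [hfdef, hgdef, smul_eq_mul]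
    rw [show (x:ℝ) ^ 2 = x ^ ((2:ℕ):ℝ) by rw [Real.rpow_natCast],
      ← Real.rpow_mul hx0.le]
    rw [show ((2:ℕ):ℝ) * ((γ + 1) / 2 - 1) = γ - 1 by push_cast; ring]
    rw [show (1:ℝ) - x ^ ((2:ℕ):ℝ) = 1 - x ^ 2 by rw [Real.rpow_natCast]]
    rw [abs_of_pos hx0, show ((α:ℝ) + 1) - 1 = α by ring]
    have hxx : x * x ^ (γ - 1) = x ^ γ := by
      have h' := Real.rpow_add hx0 1 (γ - 1)
      rw [Real.rpow_one, show (1:ℝ) + (γ - 1) = γ by ring] at h'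
      exact h'.symm
    rw [← hxx]; ring
  have hbeta := beta_value hu0 hv0
  have hhalf : ∫ u in (0:ℝ)..1, f u =
      (1/2) * (Real.Gamma ((γ + 1) / 2) * Real.Gamma (α + 1) /
        Real.Gamma ((γ + 1) / 2 + (α + 1))) := by
    have : 2 * ∫ u in (0:ℝ)..1, f u = Real.Gamma ((γ + 1) / 2) * Real.Gamma (α + 1) /
        Real.Gamma ((γ + 1) / 2 + (α + 1)) := by
      rw [← hlhs, hsub, hgdef]
      exact hbeta
    linarith
  have hneg : ∫ u in (-1:ℝ)..0, f u = ∫ u in (0:ℝ)..1, f u := by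
    calc ∫ u in (-1:ℝ)..0, f u = ∫ u in (-1:ℝ)..0, f (-u) :=
          (intervalIntegral.integral_congr (fun x _ => by simp [hfdef, neg_sq])).symm
      _ = ∫ u in (-(0:ℝ))..(-(-1:ℝ)), f u := intervalIntegral.integral_comp_neg f
      _ = ∫ u in (0:ℝ)..1, f u := by norm_num
  rw [← intervalIntegral.integral_add_adjacent_intervals hfneg hf0, hneg, hhalf]
  ring

lemma oneDimC {γ α : ℝ} (hγ : -1 < γ) (hα : -1 < α) (c : ℝ) :
    Integrable (Set.indicator {t : ℝ | t ^ 2 < c}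
      (fun t => |t| ^ γ * (c - t ^ 2) ^ α)) ∧
    ∫ t : ℝ, Set.indicator {t : ℝ | t ^ 2 < c}
      (fun t => |t| ^ γ * (c - t ^ 2) ^ α) t =
      (if 0 < c then c ^ (α + (γ + 1) / 2) else 0) *
        (Real.Gamma ((γ + 1) / 2) * Real.Gamma (α + 1) /
          Real.Gamma ((γ + 1) / 2 + (α + 1))) := by
  by_cases hc : 0 < c
  · have hsc : (0:ℝ) < Real.sqrt c := Real.sqrt_pos.2 hc
    have hset : {t : ℝ | t ^ 2 < c} = Set.Ioo (-Real.sqrt c) (Real.sqrt c) := by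
      ext t
      simp only [Set.mem_setOf_eq, Set.mem_Ioo]
      rw [← abs_lt, ← sq_abs t, ← Real.lt_sqrt (abs_nonneg t)]
    have hpow : ((Real.sqrt c)⁻¹) ^ γ = c ^ (-(γ / 2)) := by
      rw [Real.sqrt_eq_rpow, ← Real.rpow_neg hc.le, ← Real.rpow_mul hc.le]
      ring_nf
    have hspow : (Real.sqrt c) ^ γ = c ^ (γ / 2) := by
      rw [Real.sqrt_eq_rpow, ← Real.rpow_mul hc.le]
      ring_nf
    -- interval integrability on -√c..√c
    have hii : IntervalIntegrable (fun t : ℝ => |t| ^ γ * (c - t ^ 2) ^ α)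
        volume (-Real.sqrt c) (Real.sqrt c) := by
      have h1 := (oneDim_int hγ hα).comp_mul_left (c := (Real.sqrt c)⁻¹)
      rw [div_inv_eq_mul, div_inv_eq_mul, neg_one_mul, one_mul] at h1
      have h2 := h1.const_mul (c ^ ((γ:ℝ)/2 + α))
      apply iiCongr _ h2
      intro t ht
      rw [Set.uIoc_of_le (by linarith)] at ht
      have ht2 : t ^ 2 ≤ c := by
        have h1 : |t| ≤ Real.sqrt c := abs_le.2 ⟨ht.1.le, ht.2⟩
        have := Real.sq_sqrt hc.le
        nlinarith [abs_nonneg t, sq_abs t]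
      show c ^ ((γ:ℝ)/2 + α) * (|(Real.sqrt c)⁻¹ * t| ^ γ *
          (1 - ((Real.sqrt c)⁻¹ * t) ^ 2) ^ α) = |t| ^ γ * (c - t ^ 2) ^ α
      rw [abs_mul, abs_of_pos (by positivity : (0:ℝ) < (Real.sqrt c)⁻¹),
        Real.mul_rpow (by positivity) (abs_nonneg t)]
      rw [show (1 - ((Real.sqrt c)⁻¹ * t) ^ 2) = (c - t ^ 2) / c by
        rw [mul_pow, inv_pow, Real.sq_sqrt hc.le]; field_simp]
      rw [Real.div_rpow (by linarith) hc.le, hpow]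
      have hca : (c:ℝ) ^ α ≠ 0 := (Real.rpow_pos_of_pos hc α).ne'
      have hone : c ^ ((γ:ℝ)/2 + α) * c ^ (-(γ/2)) = c ^ α := by
        rw [← Real.rpow_add hc]; congr 1; ring
      calc c ^ ((γ:ℝ)/2 + α) * (c ^ (-(γ/2)) * |t| ^ γ * ((c - t ^ 2) ^ α / c ^ α))
          = (c ^ ((γ:ℝ)/2 + α) * c ^ (-(γ/2))) * |t| ^ γ * ((c - t ^ 2) ^ α / c ^ α) := by
            ring
        _ = c ^ α * |t| ^ γ * ((c - t ^ 2) ^ α / c ^ α) := by rw [hone]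
        _ = |t| ^ γ * (c - t ^ 2) ^ α := by field_simp
    -- scaling
    have hGscaled : ∀ u ∈ Set.uIcc (-1:ℝ) 1,
        |Real.sqrt c * u| ^ γ * (c - (Real.sqrt c * u) ^ 2) ^ α =
          c ^ (γ/2 + α) * (|u| ^ γ * (1 - u ^ 2) ^ α) := by
      intro u hu
      rw [Set.uIcc_of_le (by norm_num)] at hu
      have hu2 : u ^ 2 ≤ 1 := by nlinarith [hu.1, hu.2]
      rw [abs_mul, abs_of_pos hsc, Real.mul_rpow hsc.le (abs_nonneg u), hspow]
      rw [show c - (Real.sqrt c * u) ^ 2 = c * (1 - u ^ 2) by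
        rw [mul_pow, Real.sq_sqrt hc.le]; ring]
      rw [Real.mul_rpow hc.le (by linarith)]
      have honem : c ^ (γ/2) * c ^ α = c ^ (γ/2 + α) := (Real.rpow_add hc _ _).symm
      linear_combination (|u| ^ γ * (1 - u ^ 2) ^ α) * honem
    have hscale : ∫ t in (-Real.sqrt c)..(Real.sqrt c), |t| ^ γ * (c - t ^ 2) ^ α =
        c ^ (α + (γ + 1) / 2) * ∫ u in (-1:ℝ)..1, |u| ^ γ * (1 - u ^ 2) ^ α := by
      have h := intervalIntegral.integral_comp_mul_left
        (a := -1) (b := 1) (fun t : ℝ => |t| ^ γ * (c - t ^ 2) ^ α) hsc.ne'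
      rw [mul_neg_one, mul_one] at h
      have h2 : ∫ t in (-Real.sqrt c)..(Real.sqrt c), |t| ^ γ * (c - t ^ 2) ^ α =
          Real.sqrt c • ∫ x in (-1:ℝ)..1, |Real.sqrt c * x| ^ γ *
            (c - (Real.sqrt c * x) ^ 2) ^ α := by
        rw [h, smul_smul, mul_inv_cancel₀ hsc.ne', one_smul]
      rw [h2, intervalIntegral.integral_congr hGscaled, intervalIntegral.integral_const_mul,
        smul_eq_mul, ← mul_assoc]
      congr 1
      rw [Real.sqrt_eq_rpow, ← Real.rpow_add hc]
      congr 1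
      ring
    constructor
    · rw [hset, integrable_indicator_iff measurableSet_Ioo]
      have := intervalIntegrable_iff.1 hii
      rw [Set.uIoc_of_le (by linarith)] at this
      exact this.mono_set Set.Ioo_subset_Ioc_self
    · rw [hset, MeasureTheory.integral_indicator measurableSet_Ioo, ← integral_Ioc_eq_integral_Ioo,
        ← intervalIntegral.integral_of_le (by linarith), hscale, oneDim_val hγ hα, if_pos hc]
  · have hset : {t : ℝ | t ^ 2 < c} = (∅ : Set ℝ) := by
      ext t
      simp only [Set.mem_setOf_eq, Set.mem_empty_iff_false, iff_false, not_lt]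
      nlinarith [sq_nonneg t, not_lt.1 hc]
    rw [hset]
    simp [hc]

lemma mainPi : ∀ (d : ℕ) (α : ℝ), -1 < α → ∀ γ : Fin d → ℝ, (∀ i, -1 < γ i) →
    Integrable (Set.indicator {x : Fin d → ℝ | ∑ i, x i ^ 2 < 1}
      (fun x => (1 - ∑ i, x i ^ 2) ^ α * ∏ i, |x i| ^ γ i)) ∧
    ∫ x : Fin d → ℝ, Set.indicator {x : Fin d → ℝ | ∑ i, x i ^ 2 < 1}
      (fun x => (1 - ∑ i, x i ^ 2) ^ α * ∏ i, |x i| ^ γ i) x =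
      (∏ i, Real.Gamma ((γ i + 1) / 2)) * Real.Gamma (α + 1) /
        Real.Gamma (((d : ℝ) + ∑ i, γ i) / 2 + (α + 1)) := by
  intro d
  induction d with
  | zero =>
    intro α hα γ _
    have huniv : (volume : Measure (Fin 0 → ℝ)) Set.univ = 1 := by
      rw [MeasureTheory.volume_pi, Measure.pi_univ]; simp
    have hset : {x : Fin 0 → ℝ | ∑ i, x i ^ 2 < 1} = Set.univ := by
      ext x; simp
    have hfun : (fun x : Fin 0 → ℝ => (1 - ∑ i, x i ^ 2) ^ α * ∏ i, |x i| ^ γ i)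
        = fun _ => 1 := by
      funext x; simp
    rw [hset, hfun, Set.indicator_univ]
    have hfin : IsFiniteMeasure (volume : Measure (Fin 0 → ℝ)) :=
      ⟨by rw [huniv]; exact ENNReal.one_lt_top⟩
    have hG : Real.Gamma (α + 1) ≠ 0 := (Real.Gamma_pos_of_pos (by linarith)).ne'
    constructor
    · exact integrable_const 1
    · rw [MeasureTheory.integral_const, measureReal_def, huniv]
      simp
      field_simp
  | succ d ih =>
    intro α hα γ hγ
    have hγ0 := hγ 0
    set a : ℝ := (γ 0 + 1) / 2 with ha
    have ha0 : 0 < a := by rw [ha]; linarith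
    set γ' : Fin d → ℝ := fun i => γ i.succ with hγ'def
    set α' : ℝ := α + a with hα'def
    have hα' : -1 < α' := by rw [hα'def]; linarith
    obtain ⟨ihInt, ihVal⟩ := ih α' hα' γ' (fun i => hγ _)
    set B0 : ℝ := Real.Gamma a * Real.Gamma (α + 1) / Real.Gamma (a + (α + 1)) with hB0
    set F : (Fin (d+1) → ℝ) → ℝ := Set.indicator {x : Fin (d+1) → ℝ | ∑ i, x i ^ 2 < 1}
      (fun x => (1 - ∑ i, x i ^ 2) ^ α * ∏ i, |x i| ^ γ i) with hF
    set e := MeasurableEquiv.piFinSuccAbove (fun _ : Fin (d+1) => ℝ) 0 with he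
    have mp := measurePreserving_piFinSuccAbove (fun _ : Fin (d+1) => (volume : Measure ℝ)) 0
    have hcons : ∀ (t : ℝ) (y : Fin d → ℝ), e.symm (t, y) = Fin.cons t y := by
      intro t y
      simp [he, MeasurableEquiv.piFinSuccAbove, Fin.insertNthEquiv, Fin.insertNth_zero']
    have hslice : ∀ (t : ℝ) (y : Fin d → ℝ), F (e.symm (t, y)) =
        (∏ i, |y i| ^ γ' i) * Set.indicator {t : ℝ | t ^ 2 < 1 - ∑ i, y i ^ 2}
          (fun t => |t| ^ (γ 0) * ((1 - ∑ i, y i ^ 2) - t ^ 2) ^ α) t := by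
      intro t y
      rw [hcons, hF]
      have hsum : ∑ i, (Fin.cons t y : Fin (d+1) → ℝ) i ^ 2 = t ^ 2 + ∑ i, y i ^ 2 := by
        rw [Fin.sum_univ_succ]; simp
      have hprod : ∏ i, |(Fin.cons t y : Fin (d+1) → ℝ) i| ^ γ i
          = |t| ^ γ 0 * ∏ i, |y i| ^ γ' i := by
        rw [Fin.prod_univ_succ]; simp [hγ'def]
      by_cases hmem : t ^ 2 + ∑ i, y i ^ 2 < 1
      · rw [Set.indicator_of_mem
            (show (Fin.cons t y : Fin (d+1) → ℝ) ∈ _ by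
              show ∑ i, (Fin.cons t y : Fin (d+1) → ℝ) i ^ 2 < 1
              rw [hsum]; exact hmem),
          Set.indicator_of_mem (show t ∈ _ by show t ^ 2 < _; linarith)]
        rw [hsum, hprod,
          show (1 : ℝ) - (t ^ 2 + ∑ i, y i ^ 2) = (1 - ∑ i, y i ^ 2) - t ^ 2 by ring]
        ring
      · rw [Set.indicator_of_notMem
            (show (Fin.cons t y : Fin (d+1) → ℝ) ∉ _ by
              show ¬ ∑ i, (Fin.cons t y : Fin (d+1) → ℝ) i ^ 2 < 1
              rw [hsum]; exact hmem),
          Set.indicator_of_notMem (show t ∉ _ by show ¬ t ^ 2 < _; intro h; exact hmem (by linarith)),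
          mul_zero]
    have hF0 : ∀ z, 0 ≤ F z := by
      intro z
      apply Set.indicator_nonneg
      intro x hx
      have h1 : (0:ℝ) ≤ 1 - ∑ i, x i ^ 2 := le_of_lt (by simpa using hx)
      have h2 : (0:ℝ) ≤ (1 - ∑ i, x i ^ 2) ^ α := Real.rpow_nonneg h1 α
      have h3 : (0:ℝ) ≤ ∏ i, |x i| ^ γ i :=
        Finset.prod_nonneg fun i _ => Real.rpow_nonneg (abs_nonneg _) _
      exact mul_nonneg h2 h3
    have hFmeas : Measurable F := by
      apply Measurable.indicator
      · apply Measurable.mul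
        · exact (measurable_const.sub
            (Finset.measurable_sum _ fun i _ => (measurable_pi_apply i).pow_const 2)).pow
            measurable_const
        · exact Finset.measurable_prod _ fun i _ =>
            ((measurable_pi_apply i).abs).pow measurable_const
      · exact measurableSet_lt
          (Finset.measurable_sum _ fun i _ => (measurable_pi_apply i).pow_const 2)
          measurable_const
    have hGm : AEStronglyMeasurable (fun p : ℝ × (Fin d → ℝ) => F (e.symm p))
        ((volume : Measure ℝ).prod (Measure.pi fun _ : Fin d => (volume : Measure ℝ))) :=
      (hFmeas.comp e.symm.measurable).aestronglyMeasurable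
    have hout : ∀ y : Fin d → ℝ, (∫ t : ℝ, F (e.symm (t, y))) =
        B0 * Set.indicator {y : Fin d → ℝ | ∑ i, y i ^ 2 < 1}
          (fun y => (1 - ∑ i, y i ^ 2) ^ α' * ∏ i, |y i| ^ γ' i) y := by
      intro y
      have h1 := oneDimC hγ0 hα (1 - ∑ i, y i ^ 2)
      have hcongr : (fun t : ℝ => F (e.symm (t, y))) = fun t =>
          (∏ i, |y i| ^ γ' i) * Set.indicator {t : ℝ | t ^ 2 < 1 - ∑ i, y i ^ 2}
            (fun t => |t| ^ (γ 0) * ((1 - ∑ i, y i ^ 2) - t ^ 2) ^ α) t :=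
        funext fun t => hslice t y
      rw [hcongr, MeasureTheory.integral_const_mul, h1.2]
      by_cases hmem : ∑ i, y i ^ 2 < 1
      · rw [if_pos (by linarith),
          Set.indicator_of_mem (show y ∈ _ from hmem),
          show α + ((γ 0 + 1) / 2) = α' by rw [hα'def, ha]]
        ring
      · rw [if_neg (by intro h; exact hmem (by linarith)),
          Set.indicator_of_notMem (show y ∉ _ from hmem)]
        ring
    have hGint : Integrable (fun p : ℝ × (Fin d → ℝ) => F (e.symm p))
        ((volume : Measure ℝ).prod (Measure.pi fun _ : Fin d => (volume : Measure ℝ))) := by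
      rw [integrable_prod_iff' hGm]
      constructor
      · apply Filter.Eventually.of_forall
        intro y
        have hcongr : (fun t : ℝ => F (e.symm (t, y))) = fun t =>
            (∏ i, |y i| ^ γ' i) * Set.indicator {t : ℝ | t ^ 2 < 1 - ∑ i, y i ^ 2}
              (fun t => |t| ^ (γ 0) * ((1 - ∑ i, y i ^ 2) - t ^ 2) ^ α) t :=
          funext fun t => hslice t y
        rw [hcongr]
        exact ((oneDimC hγ0 hα _).1.const_mul _)
      · have heq : (fun y : Fin d → ℝ => ∫ t : ℝ, ‖F (e.symm (t, y))‖) =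
            fun y => B0 * Set.indicator {y : Fin d → ℝ | ∑ i, y i ^ 2 < 1}
              (fun y => (1 - ∑ i, y i ^ 2) ^ α' * ∏ i, |y i| ^ γ' i) y := by
          funext y
          rw [show (∫ t : ℝ, ‖F (e.symm (t, y))‖) = ∫ t : ℝ, F (e.symm (t, y)) from
            MeasureTheory.integral_congr_ae (Filter.Eventually.of_forall fun t =>
              Real.norm_of_nonneg (hF0 _))]
          exact hout y
        rw [heq]
        exact ihInt.const_mul B0
    have hvolpi : (volume : Measure (Fin (d+1) → ℝ)) = Measure.pi fun _ => volume :=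
      MeasureTheory.volume_pi
    have hFint : Integrable F := by
      rw [hvolpi, ← (mp.symm).integrable_comp_emb (MeasurableEquiv.measurableEmbedding _)]
      exact hGint
    have hFval : ∫ z, F z = B0 * ((∏ i, Real.Gamma ((γ' i + 1) / 2)) * Real.Gamma (α' + 1) /
        Real.Gamma (((d : ℝ) + ∑ i, γ' i) / 2 + (α' + 1))) := by
      have h1 : ∫ z, F z = ∫ p, F (e.symm p)
          ∂((volume : Measure ℝ).prod (Measure.pi fun _ : Fin d => (volume : Measure ℝ))) := by
        rw [hvolpi, ← (mp.symm).integral_comp (MeasurableEquiv.measurableEmbedding _)]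
      rw [h1, MeasureTheory.integral_prod_symm _ hGint]
      rw [show (fun y : Fin d → ℝ => ∫ t : ℝ, F (e.symm (t, y))) =
          fun y => B0 * Set.indicator {y : Fin d → ℝ | ∑ i, y i ^ 2 < 1}
            (fun y => (1 - ∑ i, y i ^ 2) ^ α' * ∏ i, |y i| ^ γ' i) y from funext hout]
      rw [MeasureTheory.integral_const_mul]
      rw [show (volume : Measure (Fin d → ℝ)) = Measure.pi fun _ => volume from
        MeasureTheory.volume_pi] at ihVal
      rw [ihVal]
    refine ⟨hFint, ?_⟩
    rw [hFval]
    have hprodG : ∏ i : Fin (d+1), Real.Gamma ((γ i + 1) / 2) =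
        Real.Gamma a * ∏ i, Real.Gamma ((γ' i + 1) / 2) := by
      rw [Fin.prod_univ_succ, ha]
    have hsumG : ∑ i : Fin (d+1), γ i = γ 0 + ∑ i, γ' i := by
      rw [Fin.sum_univ_succ]
    rw [hprodG, hsumG]
    rw [show α' + 1 = a + (α + 1) by rw [hα'def]; ring]
    rw [show ((d : ℝ) + ∑ i, γ' i) / 2 + (a + (α + 1)) =
        (((d+1 : ℕ) : ℝ) + (γ 0 + ∑ i, γ' i)) / 2 + (α + 1) by
      push_cast; rw [ha]; ring]
    have hGa : Real.Gamma (a + (α + 1)) ≠ 0 :=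
      (Real.Gamma_pos_of_pos (by linarith)).ne'
    have habs : ∀ A B C P T : ℝ, C ≠ 0 → T ≠ 0 →
        A * B / C * (P * C / T) = A * P * B / T := by
      intro A B C P T hC hT
      field_simp
    have hGT : Real.Gamma ((((d+1:ℕ) : ℝ) + (γ 0 + ∑ i, γ' i)) / 2 + (α + 1)) ≠ 0 := by
      refine (Real.Gamma_pos_of_pos ?_).ne'
      have hsb : -(d+1 : ℝ) < γ 0 + ∑ i, γ' i := by
        have h1 : ∀ i : Fin d, -1 < γ' i := fun i => hγ _
        have h2 : -(d : ℝ) ≤ ∑ i, γ' i := by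
          calc -(d : ℝ) = ∑ _i : Fin d, (-1 : ℝ) := by simp
            _ ≤ ∑ i, γ' i := Finset.sum_le_sum fun i _ => (h1 i).le
        linarith
      push_cast at hsb ⊢
      linarith
    rw [hB0]
    exact habs _ _ _ _ _ hGa hGT

end auxStmt6

theorem stmt6 (d : ℕ) (hd : 1 ≤ d) (α : ℝ) (hα : -1 < α) (γ : Fin d → ℝ)
    (hγ : ∀ i, -1 < γ i) :
    IntegrableOn (W α γ) (ball (0 : E d) 1) ∧
    ∫ x in ball (0 : E d) 1, W α γ x =
      (∏ i, Real.Gamma ((γ i + 1) / 2)) / Real.Gamma (((d : ℝ) + ∑ i, γ i) / 2) *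
        (Real.Gamma (((d : ℝ) + ∑ i, γ i) / 2) * Real.Gamma (α + 1) /
          Real.Gamma (((d : ℝ) + ∑ i, γ i) / 2 + (α + 1))) := by
  obtain ⟨hInt, hVal⟩ := mainPi d α hα γ hγ
  set q := (MeasurableEquiv.toLp 2 (Fin d → ℝ)).symm with hq
  have vp := EuclideanSpace.volume_preserving_symm_measurableEquiv_toLp (Fin d)
  set Fpi : (Fin d → ℝ) → ℝ := Set.indicator {x : Fin d → ℝ | ∑ i, x i ^ 2 < 1}
      (fun x => (1 - ∑ i, x i ^ 2) ^ α * ∏ i, |x i| ^ γ i) with hFpi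
  have key : ∀ x : E d, Fpi (q x) = Set.indicator (ball (0 : E d) 1) (W α γ) x := by
    intro x
    have hqi : ∀ i, (q x) i = x i := fun i => rfl
    have hnorm : ‖x‖ ^ 2 = ∑ i, x i ^ 2 := by
      rw [EuclideanSpace.norm_eq, Real.sq_sqrt (Finset.sum_nonneg fun i _ => sq_nonneg _)]
      simp [Real.norm_eq_abs, sq_abs]
    have hmem : (q x) ∈ {z : Fin d → ℝ | ∑ i, z i ^ 2 < 1} ↔ x ∈ ball (0 : E d) 1 := by
      have h1 : (∑ i, (q x) i ^ 2) = ‖x‖ ^ 2 := hnorm.symm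
      rw [mem_ball_zero_iff, Set.mem_setOf_eq, h1, sq_lt_one_iff_abs_lt_one,
        abs_of_nonneg (norm_nonneg x)]
    by_cases hx : x ∈ ball (0 : E d) 1
    · rw [hFpi, Set.indicator_of_mem (hmem.2 hx), Set.indicator_of_mem hx]
      simp only [W, hqi, hnorm]
    · rw [hFpi, Set.indicator_of_notMem (fun h => hx (hmem.1 h)),
        Set.indicator_of_notMem hx]
  have hcomp : (fun x : E d => Fpi (q x)) = Set.indicator (ball (0 : E d) 1) (W α γ) :=
    funext key
  have hIndInt : Integrable (Set.indicator (ball (0 : E d) 1) (W α γ)) := by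
    rw [← hcomp]
    exact (vp.integrable_comp_emb (MeasurableEquiv.measurableEmbedding _)).2 hInt
  have hIndVal : ∫ x : E d, Set.indicator (ball (0 : E d) 1) (W α γ) x =
      (∏ i, Real.Gamma ((γ i + 1) / 2)) * Real.Gamma (α + 1) /
        Real.Gamma (((d : ℝ) + ∑ i, γ i) / 2 + (α + 1)) := by
    rw [← hcomp, vp.integral_comp (MeasurableEquiv.measurableEmbedding _)]
    exact hVal
  have hS : (0:ℝ) < ((d : ℝ) + ∑ i, γ i) / 2 := by
    have h2 : -(d : ℝ) < ∑ i, γ i := by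
      have : ∑ _i : Fin d, (-1 : ℝ) < ∑ i, γ i := by
        apply Finset.sum_lt_sum_of_nonempty
        · exact Finset.univ_nonempty_iff.2 (Fin.pos_iff_nonempty.1 hd)
        · exact fun i _ => hγ i
      simpa using this
    linarith
  have hGS : Real.Gamma (((d : ℝ) + ∑ i, γ i) / 2) ≠ 0 := (Real.Gamma_pos_of_pos hS).ne'
  constructor
  · exact (integrable_indicator_iff measurableSet_ball).1 hIndInt
  · rw [← MeasureTheory.integral_indicator measurableSet_ball, hIndVal]
    have hGT : Real.Gamma (((d : ℝ) + ∑ i, γ i) / 2 + (α + 1)) ≠ 0 :=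
      (Real.Gamma_pos_of_pos (by linarith)).ne'
    have habs : ∀ P S B T : ℝ, S ≠ 0 → T ≠ 0 → P * B / T = P / S * (S * B / T) := by
      intro P S B T hS' hT'
      field_simp
    exact habs _ _ _ _ hGS hGT
end
end

section
/- Let α > -1, γ ∈ (-1,∞)^d, and let 𝒱_k^{α,γ} denote the space of polynomials of degree k orthogonal to all polynomials of degree ≤ k-1 in L²(B^d, W_{α,γ}). If p_k ∈ 𝒱_k^{α+1,γ}, then the polynomial x ↦ (1-‖x‖²) p_k(x) belongs to 𝒱_k^{α,γ} ⊕ 𝒱_{k+2}^{α,γ}. -/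
open MeasureTheory Metric

noncomputable section

set_option maxRecDepth 8000
set_option synthInstance.maxHeartbeats 1000000
set_option maxHeartbeats 1000000

namespace StmtAux

open MvPolynomial

section Analytic
open Set

variable {α : ℝ}


lemma int_rpow_Ioo (hα : -1 < α) (a : ℝ) : IntegrableOn (fun t : ℝ => t ^ α) (Ioo 0 a) := by
  have h := (intervalIntegral.intervalIntegrable_rpow' (a := 0) (b := a) hα)
  rcases le_or_gt a 0 with ha | ha
  · rw [Ioo_eq_empty (by linarith)]; exact integrableOn_empty
  · rw [intervalIntegrable_iff_integrableOn_Ioo_of_le ha.le] at h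
    exact h

lemma int_abs_rpow {c : ℝ} (hc : -1 < c) :
    IntegrableOn (fun t : ℝ => |t| ^ c) (Ioo (-1) 1) := by
  have h2 : IntegrableOn (fun t : ℝ => |t| ^ c) (Ioo 0 1) :=
    (int_rpow_Ioo hc 1).congr_fun (fun t ht => by rw [abs_of_pos ht.1]) measurableSet_Ioo
  have h3 : IntegrableOn (fun t : ℝ => |t| ^ c) (Ioo (-1) 0) := by
    have hpre : (Neg.neg : ℝ → ℝ) ⁻¹' (Ioo 0 1) = Ioo (-1) 0 := by
      ext t; simp only [mem_preimage, mem_Ioo]; constructor <;> intro ⟨u, v⟩ <;>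
        constructor <;> linarith
    have := ((Measure.measurePreserving_neg (volume : Measure ℝ)).integrableOn_comp_preimage
      (MeasurableEquiv.neg ℝ).measurableEmbedding (f := fun t : ℝ => |t| ^ c)
      (s := Ioo 0 1)).mpr h2
    rw [hpre] at this
    exact this.congr_fun (fun t _ => by simp [Function.comp, abs_neg]) measurableSet_Ioo
  have h4 : IntegrableOn (fun t : ℝ => |t| ^ c) ({(0 : ℝ)}) := by
    unfold IntegrableOn
    rw [Measure.restrict_eq_zero.mpr (measure_singleton 0)]
    exact integrable_zero_measure
  refine ((h3.union (h4.union h2)).mono_set ?_)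
  intro t ht
  rcases lt_trichotomy t 0 with h | h | h
  · left; exact ⟨ht.1, h⟩
  · right; left; simp [h]
  · right; right; exact ⟨h, ht.2⟩

lemma sub_left_measurePreserving (R : ℝ) :
    MeasurePreserving (fun t : ℝ => R - t) volume volume :=
  Measure.measurePreserving_sub_left volume R

lemma sub_left_emb (R : ℝ) : MeasurableEmbedding (fun t : ℝ => R - t) := by
  have : (fun t : ℝ => R - t) = fun t : ℝ => -t + R := by funext t; ring
  rw [this]
  exact (MeasurableEquiv.addRight R).measurableEmbedding.comp
    (MeasurableEquiv.neg ℝ).measurableEmbedding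

lemma sub_left_pre (R b : ℝ) : (fun t : ℝ => R - t) ⁻¹' (Ioo 0 (R - b)) = Ioo b R := by
  ext t; simp only [mem_preimage, mem_Ioo]; constructor <;> intro ⟨u, v⟩ <;>
    constructor <;> linarith

lemma int_pow_sub (hα : -1 < α) (R b : ℝ) :
    IntegrableOn (fun t : ℝ => (R - t) ^ α) (Ioo b R) := by
  have := ((sub_left_measurePreserving R).integrableOn_comp_preimage (sub_left_emb R)
    (f := fun s : ℝ => s ^ α) (s := Ioo 0 (R - b))).mpr (int_rpow_Ioo hα (R - b))
  rwa [sub_left_pre] at this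

lemma int_pow_sub_val (hα : -1 < α) (R b : ℝ) :
    ∫ t in Ioo b R, (R - t) ^ α = ∫ s in Ioo 0 (R - b), s ^ α := by
  rw [← sub_left_pre R b]
  exact (sub_left_measurePreserving R).setIntegral_preimage_emb (sub_left_emb R)
    (fun s : ℝ => s ^ α) _

lemma int_pow_sub_bound (hα : -1 < α) {R b : ℝ} (hR : R ≤ 1) (hb : 0 ≤ b) :
    ∫ t in Ioo b R, (R - t) ^ α ≤ ∫ s in Ioo (0 : ℝ) 2, s ^ α := by
  rw [int_pow_sub_val hα]
  apply setIntegral_mono_set (int_rpow_Ioo hα 2)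
  · refine (ae_restrict_iff' measurableSet_Ioo).mpr (ae_of_all _ fun s hs => ?_)
    exact Real.rpow_nonneg hs.1.le _
  · apply HasSubset.Subset.eventuallyLE
    apply Ioo_subset_Ioo le_rfl
    linarith


section Slice

variable {m : ℕ}

/-- the indicator-product dominating function -/
noncomputable def boxProd (δ : Fin m → ℝ) (z : Fin m → ℝ) : ℝ :=
  ∏ i, (Ioo (-1 : ℝ) 1).indicator (fun t => |t| ^ δ i) (z i)

lemma boxProd_nonneg (δ z : Fin m → ℝ) : 0 ≤ boxProd δ z :=
  Finset.prod_nonneg fun i _ => Set.indicator_nonneg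
    (fun t _ => Real.rpow_nonneg (abs_nonneg _) _) _

lemma boxProd_integrable {δ : Fin m → ℝ} (hδ : ∀ i, -1 < δ i) : Integrable (boxProd δ) := by
  unfold boxProd
  exact Integrable.fintype_prod (𝕜 := ℝ) (f := fun i => (Ioo (-1 : ℝ) 1).indicator
    (fun t => |t| ^ δ i)) fun i =>
    (integrable_indicator_iff measurableSet_Ioo).mpr (int_abs_rpow (hδ i))

lemma boxProd_eq {δ z : Fin m → ℝ} (hz : ∀ i, |z i| < 1) :
    boxProd δ z = ∏ i, |z i| ^ δ i := by
  unfold boxProd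
  refine Finset.prod_congr rfl fun i _ => ?_
  rw [Set.indicator_of_mem]
  rw [mem_Ioo]
  constructor <;> [linarith [abs_lt.mp (hz i)]; linarith [abs_lt.mp (hz i)]]

end Slice


section Main

variable {m : ℕ}

lemma prod_piece_integrable (hα : -1 < α) {γ₀ : ℝ} (hγ₀ : -1 < γ₀) {δ : Fin m → ℝ}
    (hδ : ∀ i, -1 < δ i) {b : ℝ} (hb : 0 < b) (hb1 : b ≤ 1) :
    IntegrableOn (fun p : ℝ × (Fin m → ℝ) =>
        (1 - (p.1 ^ 2 + ∑ i, (p.2 i) ^ 2)) ^ α * (|p.1| ^ γ₀ * ∏ i, |p.2 i| ^ δ i))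
      {p : ℝ × (Fin m → ℝ) | p.1 ^ 2 + ∑ i, (p.2 i) ^ 2 < 1 ∧ b ≤ |p.1|} := by
  set F' : ℝ × (Fin m → ℝ) → ℝ := fun p =>
    (1 - (p.1 ^ 2 + ∑ i, (p.2 i) ^ 2)) ^ α * (|p.1| ^ γ₀ * ∏ i, |p.2 i| ^ δ i) with hF'
  set A' : Set (ℝ × (Fin m → ℝ)) :=
    {p | p.1 ^ 2 + ∑ i, (p.2 i) ^ 2 < 1 ∧ b ≤ |p.1|} with hA'
  have hsum_m : Measurable fun p : ℝ × (Fin m → ℝ) => p.1 ^ 2 + ∑ i, (p.2 i) ^ 2 := by fun_prop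
  have habs_m : Measurable fun p : ℝ × (Fin m → ℝ) => |p.1| := by fun_prop
  have hA'm : MeasurableSet A' :=
    (measurableSet_lt hsum_m measurable_const).inter (measurableSet_le measurable_const habs_m)
  have hF'm : Measurable F' := by unfold F'; fun_prop
  rw [← integrable_indicator_iff hA'm, Measure.volume_eq_prod]
  -- constants and auxiliary data
  set R : (Fin m → ℝ) → ℝ := fun z => Real.sqrt (1 - ∑ i, (z i) ^ 2) with hRdef
  set K₁ : ℝ := max ((2 : ℝ) ^ α) ((b / 2) ^ α) with hK₁def
  set K₂ : ℝ := max ((b / 2) ^ γ₀) 1 with hK₂def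
  set Cz : (Fin m → ℝ) → ℝ := fun z => ∏ i, |z i| ^ δ i with hCzdef
  set D : (Fin m → ℝ) → Set ℝ := fun z => {t | b / 2 < |t| ∧ |t| < R z} with hDdef
  set M₂ : ℝ := ∫ s in Ioo (0 : ℝ) 2, s ^ α with hM₂def
  have hK₁ : 0 ≤ K₁ := le_trans (Real.rpow_nonneg (by norm_num) _) (le_max_left _ _)
  have hK₂ : 0 ≤ K₂ := le_trans zero_le_one (le_max_right _ _)
  have hCz : ∀ z, 0 ≤ Cz z := fun z =>
    Finset.prod_nonneg fun i _ => Real.rpow_nonneg (abs_nonneg _) _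
  have hM₂ : 0 ≤ M₂ := setIntegral_nonneg measurableSet_Ioo fun s hs =>
    Real.rpow_nonneg hs.1.le _
  have hsum0 : ∀ z : Fin m → ℝ, 0 ≤ ∑ i, (z i) ^ 2 :=
    fun z => Finset.sum_nonneg fun i _ => sq_nonneg _
  have hR0 : ∀ z, 0 ≤ R z := fun z => Real.sqrt_nonneg _
  have hR1 : ∀ z, R z ≤ 1 := fun z => Real.sqrt_le_one.mpr (by linarith [hsum0 z])
  have habs1 : Measurable fun t : ℝ => |t| := by fun_prop
  have hDmeas : ∀ z, MeasurableSet (D z) := by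
    intro z
    exact (measurableSet_lt measurable_const habs1).inter
      (measurableSet_lt habs1 measurable_const)
  have hDeq : ∀ z, D z = Ioo (b / 2) (R z) ∪ Neg.neg ⁻¹' (Ioo (b / 2) (R z)) := by
    intro z
    ext t
    simp only [hDdef, mem_setOf_eq, mem_union, mem_Ioo, mem_preimage]
    constructor
    · rintro ⟨h1, h2⟩
      rcases le_or_gt t 0 with h | h
      · right; rw [abs_of_nonpos h] at h1 h2; exact ⟨h1, h2⟩
      · left; rw [abs_of_pos h] at h1 h2; exact ⟨h1, h2⟩
    · rintro (⟨h1, h2⟩ | ⟨h1, h2⟩)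
      · rw [abs_of_pos (by linarith)]; exact ⟨h1, h2⟩
      · rw [abs_of_neg (by linarith)]; exact ⟨by linarith, by linarith⟩
  have hDdisj : ∀ z, Disjoint (Ioo (b / 2) (R z)) (Neg.neg ⁻¹' (Ioo (b / 2) (R z))) := by
    intro z
    rw [Set.disjoint_left]
    rintro t ⟨h1, _⟩ ⟨h3, _⟩
    linarith
  have hIpos : ∀ z, IntegrableOn (fun t => (R z - |t|) ^ α) (Ioo (b / 2) (R z)) := by
    intro z
    exact (int_pow_sub hα (R z) (b / 2)).congr_fun
      (fun t ht => by rw [abs_of_pos (lt_trans (by linarith) ht.1)]) measurableSet_Ioo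
  have hIneg : ∀ z, IntegrableOn (fun t => (R z - |t|) ^ α)
      (Neg.neg ⁻¹' (Ioo (b / 2) (R z))) := by
    intro z
    have h0 := ((Measure.measurePreserving_neg (volume : Measure ℝ)).integrableOn_comp_preimage
      (MeasurableEquiv.neg ℝ).measurableEmbedding (f := fun t => (R z - |t|) ^ α)
      (s := Ioo (b / 2) (R z))).mpr (hIpos z)
    exact h0.congr_fun (fun t _ => by simp [Function.comp, abs_neg])
      (measurableSet_Ioo.preimage measurable_neg)
  have hDint : ∀ z, IntegrableOn (fun t => (R z - |t|) ^ α) (D z) := by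
    intro z
    rw [hDeq z]
    exact (hIpos z).union (hIneg z)
  have hIval : ∀ z, ∫ t in D z, (R z - |t|) ^ α ≤ 2 * M₂ := by
    intro z
    rw [hDeq z, setIntegral_union (hDdisj z) (measurableSet_Ioo.preimage measurable_neg)
      (hIpos z) (hIneg z)]
    have e1 : ∫ t in Ioo (b / 2) (R z), (R z - |t|) ^ α
        = ∫ t in Ioo (b / 2) (R z), (R z - t) ^ α :=
      setIntegral_congr_fun measurableSet_Ioo
        (fun t ht => by rw [abs_of_pos (lt_trans (by linarith) ht.1)])
    have e2 : ∫ t in Neg.neg ⁻¹' (Ioo (b / 2) (R z)), (R z - |t|) ^ α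
        = ∫ t in Ioo (b / 2) (R z), (R z - |t|) ^ α :=
      calc ∫ t in Neg.neg ⁻¹' (Ioo (b / 2) (R z)), (R z - |t|) ^ α
          = ∫ t in Neg.neg ⁻¹' (Ioo (b / 2) (R z)), (fun u => (R z - |u|) ^ α) (-t) :=
            setIntegral_congr_fun (measurableSet_Ioo.preimage measurable_neg)
              (fun t _ => by simp [abs_neg])
        _ = ∫ t in Ioo (b / 2) (R z), (R z - |t|) ^ α :=
            (Measure.measurePreserving_neg (volume : Measure ℝ)).setIntegral_preimage_emb
              (MeasurableEquiv.neg ℝ).measurableEmbedding (fun u => (R z - |u|) ^ α) _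
    have hle : ∫ t in Ioo (b / 2) (R z), (R z - t) ^ α ≤ M₂ :=
      int_pow_sub_bound hα (hR1 z) (by linarith)
    rw [e2, e1]
    linarith
  -- the slice dominating function
  set ψ : (Fin m → ℝ) → ℝ → ℝ :=
    fun z t => (K₁ * K₂ * Cz z) * (D z).indicator (fun t => (R z - |t|) ^ α) t with hψdef
  have hψint : ∀ z, Integrable (ψ z) :=
    fun z => ((integrable_indicator_iff (hDmeas z)).mpr (hDint z)).const_mul _
  have hψnn : ∀ z t, 0 ≤ ψ z t := by
    intro z t
    apply mul_nonneg (by positivity)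
    apply Set.indicator_nonneg
    intro s hs
    exact Real.rpow_nonneg (by rw [hDdef] at hs; linarith [hs.2]) _
  -- pointwise bound
  have hbound : ∀ z t, ‖(A'.indicator F') (t, z)‖ ≤ ψ z t := by
    intro z t
    by_cases hA : (t, z) ∈ A'
    · have h1 := hA.1
      have h2 := hA.2
      have ht1 : |t| < R z := (Real.lt_sqrt (abs_nonneg t)).mpr (by rw [sq_abs]; linarith)
      have htD : t ∈ D z := ⟨by linarith, ht1⟩
      have hRz : R z ^ 2 = 1 - ∑ i, (z i) ^ 2 := Real.sq_sqrt (by nlinarith [sq_nonneg t])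
      have he : 1 - (t ^ 2 + ∑ i, (z i) ^ 2) = (R z - |t|) * (R z + |t|) := by
        have h5 : (R z - |t|) * (R z + |t|) = R z ^ 2 - |t| ^ 2 := by ring
        rw [h5, hRz, sq_abs]; ring
      have hRpos : (0 : ℝ) ≤ R z - |t| := by linarith
      have hRb : b / 2 ≤ R z + |t| := by linarith [hR0 z]
      have hR2 : R z + |t| ≤ 2 := by linarith [hR1 z]
      have h3 : (R z + |t|) ^ α ≤ K₁ := by
        rcases le_or_gt 0 α with hc | hc
        · exact le_trans (Real.rpow_le_rpow (by linarith [abs_nonneg t, hR0 z]) hR2 hc)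
            (le_max_left _ _)
        · exact le_trans (Real.rpow_le_rpow_of_nonpos (by linarith) hRb hc.le)
            (le_max_right _ _)
      have h4 : |t| ^ γ₀ ≤ K₂ := by
        rcases le_or_gt 0 γ₀ with hc | hc
        · exact le_trans (Real.rpow_le_one (abs_nonneg t) (by linarith) hc) (le_max_right _ _)
        · exact le_trans (Real.rpow_le_rpow_of_nonpos (by linarith) (by linarith) hc.le)
            (le_max_left _ _)
      have hval : F' (t, z) = ((R z + |t|) ^ α * |t| ^ γ₀) * (Cz z * (R z - |t|) ^ α) := by
        show (1 - (t ^ 2 + ∑ i, (z i) ^ 2)) ^ α * (|t| ^ γ₀ * ∏ i, |z i| ^ δ i) = _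
        rw [he, Real.mul_rpow hRpos (by linarith [abs_nonneg t, hR0 z])]
        rw [hCzdef]
        ring
      have hnn : 0 ≤ F' (t, z) := by
        rw [hval]
        have := hCz z
        positivity
      have hψval : ψ z t = K₁ * K₂ * Cz z * (R z - |t|) ^ α := by
        simp only [hψdef]
        rw [Set.indicator_of_mem htD]
      rw [Set.indicator_of_mem hA, Real.norm_eq_abs, abs_of_nonneg hnn, hval, hψval]
      calc ((R z + |t|) ^ α * |t| ^ γ₀) * (Cz z * (R z - |t|) ^ α)
          ≤ (K₁ * K₂) * (Cz z * (R z - |t|) ^ α) := by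
            apply mul_le_mul_of_nonneg_right
              (mul_le_mul h3 h4 (Real.rpow_nonneg (abs_nonneg t) _) hK₁)
            exact mul_nonneg (hCz z) (Real.rpow_nonneg hRpos _)
        _ = K₁ * K₂ * Cz z * (R z - |t|) ^ α := by ring
    · rw [Set.indicator_of_notMem hA, norm_zero]
      exact hψnn z t
  -- slices are integrable
  have hslice : ∀ z, Integrable (fun t => (A'.indicator F') (t, z)) := by
    intro z
    refine Integrable.mono' (hψint z) ?_ (ae_of_all _ (hbound z))
    exact ((hF'm.indicator hA'm).comp (measurable_id.prodMk measurable_const)).aestronglyMeasurable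
  -- the outer integral function is dominated
  have hout : ∀ z, ∫ t, ‖(A'.indicator F') (t, z)‖ ≤ (K₁ * K₂ * (2 * M₂)) * boxProd δ z := by
    intro z
    by_cases hz : ∀ i, |z i| < 1
    · have h6 : ∫ t, ‖(A'.indicator F') (t, z)‖ ≤ ∫ t, ψ z t := by
        apply integral_mono (hslice z).norm (hψint z)
        exact hbound z
      have h7 : ∫ t, ψ z t = (K₁ * K₂ * Cz z) * ∫ t in D z, (R z - |t|) ^ α := by
        simp only [hψdef]
        rw [integral_const_mul, integral_indicator (hDmeas z)]
      have h8 : (K₁ * K₂ * Cz z) * (∫ t in D z, (R z - |t|) ^ α)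
          ≤ (K₁ * K₂ * Cz z) * (2 * M₂) :=
        mul_le_mul_of_nonneg_left (hIval z) (by positivity)
      have h9 : boxProd δ z = Cz z := boxProd_eq hz
      rw [h9]
      calc ∫ t, ‖(A'.indicator F') (t, z)‖ ≤ (K₁ * K₂ * Cz z) * ∫ t in D z, (R z - |t|) ^ α := by
            rw [← h7]; exact h6
        _ ≤ (K₁ * K₂ * Cz z) * (2 * M₂) := h8
        _ = K₁ * K₂ * (2 * M₂) * Cz z := by ring
    · push_neg at hz
      obtain ⟨i, hi⟩ := hz
      have hzero : ∀ t, (A'.indicator F') (t, z) = 0 := by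
        intro t
        apply Set.indicator_of_notMem
        rintro ⟨h1, _⟩
        have h10 : (1 : ℝ) ≤ (z i) ^ 2 := by rw [← sq_abs]; nlinarith
        have h11 : (z i) ^ 2 ≤ ∑ i', (z i') ^ 2 :=
          Finset.single_le_sum (fun i' _ => sq_nonneg (z i')) (Finset.mem_univ i)
        nlinarith [sq_nonneg t]
      simp_rw [hzero, norm_zero, integral_zero]
      exact mul_nonneg (by positivity) (boxProd_nonneg δ z)
  -- assemble via Fubini
  have hAESM : AEStronglyMeasurable (A'.indicator F')
      ((volume : Measure ℝ).prod (volume : Measure (Fin m → ℝ))) :=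
    (hF'm.indicator hA'm).aestronglyMeasurable
  refine (integrable_prod_iff' hAESM).mpr ⟨ae_of_all _ hslice, ?_⟩
  refine Integrable.mono' ((boxProd_integrable hδ).const_mul (K₁ * K₂ * (2 * M₂))) ?_
    (ae_of_all _ fun z => ?_)
  · have hSM : StronglyMeasurable (Function.uncurry
        fun (t : ℝ) (z : Fin m → ℝ) => ‖(A'.indicator F') (t, z)‖) :=
      ((hF'm.indicator hA'm).norm).stronglyMeasurable
    exact hSM.integral_prod_left.aestronglyMeasurable
  · rw [Real.norm_eq_abs, abs_of_nonneg (integral_nonneg fun t => norm_nonneg _)]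
    exact hout z

end Main

section Glue

lemma pi_integrable (d : ℕ) (α : ℝ) (hα : -1 < α) (γ : Fin d → ℝ) (hγ : ∀ i, -1 < γ i) :
    IntegrableOn (fun y : Fin d → ℝ => (1 - ∑ i, (y i) ^ 2) ^ α * ∏ i, |y i| ^ γ i)
      {y : Fin d → ℝ | ∑ i, (y i) ^ 2 < 1} := by
  cases d with
  | zero =>
      have hμ : (volume : Measure (Fin 0 → ℝ)) Set.univ = 1 := by
        rw [volume_pi, Measure.pi_univ]; simp
      have hF : ∀ y : Fin 0 → ℝ, (1 - ∑ i, (y i) ^ 2) ^ α * ∏ i, |y i| ^ γ i = 1 := by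
        intro y; simp [Real.one_rpow]
      have hmeas : MeasurableSet {y : Fin 0 → ℝ | ∑ i, (y i) ^ 2 < 1} := by
        have : Measurable fun y : Fin 0 → ℝ => ∑ i, (y i) ^ 2 := by fun_prop
        exact measurableSet_lt this measurable_const
      have hc : IntegrableOn (fun _ : Fin 0 → ℝ => (1 : ℝ))
          {y : Fin 0 → ℝ | ∑ i, (y i) ^ 2 < 1} := by
        refine integrableOn_const ?_ (by simp)
        apply ne_of_lt
        exact lt_of_le_of_lt (measure_mono (Set.subset_univ _)) (by rw [hμ]; exact ENNReal.one_lt_top)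
      exact hc.congr_fun (fun y _ => (hF y).symm) hmeas
  | succ m =>
      set b := Real.sqrt (3 / (4 * (m + 1 : ℝ))) with hbdef
      have hb0 : 0 < b := Real.sqrt_pos.mpr (by positivity)
      have hbsq : b ^ 2 = 3 / (4 * (m + 1 : ℝ)) := Real.sq_sqrt (by positivity)
      have hm1 : (1 : ℝ) ≤ (m + 1 : ℝ) := by
        have := Nat.cast_nonneg (α := ℝ) m; linarith
      have hb1 : b ≤ 1 := by
        rw [show (1 : ℝ) = Real.sqrt 1 from (Real.sqrt_one).symm, hbdef]
        apply Real.sqrt_le_sqrt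
        rw [div_le_one (by positivity)]
        linarith
      have hsum0 : ∀ y : Fin (m + 1) → ℝ, 0 ≤ ∑ i, (y i) ^ 2 :=
        fun y => Finset.sum_nonneg fun i _ => sq_nonneg _
      set F : (Fin (m + 1) → ℝ) → ℝ :=
        fun y => (1 - ∑ i, (y i) ^ 2) ^ α * ∏ i, |y i| ^ γ i with hFdef
      have hFm : Measurable F := by unfold F; fun_prop
      have hsmm : Measurable fun y : Fin (m + 1) → ℝ => ∑ i, (y i) ^ 2 := by fun_prop
      set S₀ : Set (Fin (m + 1) → ℝ) :=
        {y | ∑ i, (y i) ^ 2 < 1 ∧ ∑ i, (y i) ^ 2 ≤ 3 / 4} with hS₀def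
      set A : Fin (m + 1) → Set (Fin (m + 1) → ℝ) :=
        fun j => {y | ∑ i, (y i) ^ 2 < 1 ∧ b ≤ |y j|} with hAdef
      have hcover : {y : Fin (m + 1) → ℝ | ∑ i, (y i) ^ 2 < 1} ⊆ S₀ ∪ ⋃ j, A j := by
        intro y hy
        rcases le_or_gt (∑ i, (y i) ^ 2) (3 / 4) with h | h
        · exact Or.inl ⟨hy, h⟩
        · right
          have hex : ∃ j, b ≤ |y j| := by
            by_contra hno
            push_neg at hno
            have hall : ∀ j, (y j) ^ 2 ≤ b ^ 2 := fun j => by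
              rw [← sq_abs]; exact pow_le_pow_left₀ (abs_nonneg _) (hno j).le 2
            have hsum : ∑ i, (y i) ^ 2 ≤ (m + 1 : ℝ) * b ^ 2 := by
              calc ∑ i, (y i) ^ 2 ≤ ∑ _i : Fin (m + 1), b ^ 2 :=
                    Finset.sum_le_sum fun i _ => hall i
                _ = (m + 1 : ℝ) * b ^ 2 := by
                    rw [Finset.sum_const, Finset.card_univ, Fintype.card_fin,
                      nsmul_eq_mul]
                    push_cast; ring
            rw [hbsq] at hsum
            have he : (m + 1 : ℝ) * (3 / (4 * (m + 1 : ℝ))) = 3 / 4 := by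
              field_simp
            rw [he] at hsum
            linarith
          obtain ⟨j, hj⟩ := hex
          exact Set.mem_iUnion.mpr ⟨j, ⟨hy, hj⟩⟩
      refine IntegrableOn.mono_set ?_ hcover
      rw [integrableOn_union]
      constructor
      · -- inner piece
        set C₀ : ℝ := max ((4 : ℝ)⁻¹ ^ α) 1 with hC₀def
        have hS₀meas : MeasurableSet S₀ :=
          (measurableSet_lt hsmm measurable_const).inter
            (measurableSet_le hsmm measurable_const)
        refine Integrable.mono' ((boxProd_integrable hγ).const_mul C₀).integrableOn
          hFm.aestronglyMeasurable ?_
        refine (ae_restrict_iff' hS₀meas).mpr (ae_of_all _ fun y hy => ?_)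
        obtain ⟨h1, h2⟩ := hy
        have hyi : ∀ i, |y i| < 1 := by
          intro i
          have h3 := Finset.single_le_sum (fun i' _ => sq_nonneg (y i')) (Finset.mem_univ i)
          by_contra hcon
          push_neg at hcon
          nlinarith [sq_abs (y i)]
        have hprodnn : 0 ≤ ∏ i, |y i| ^ γ i :=
          Finset.prod_nonneg fun i _ => Real.rpow_nonneg (abs_nonneg _) _
        have hle : (1 - ∑ i, (y i) ^ 2) ^ α ≤ C₀ := by
          rcases le_or_gt 0 α with hc | hc
          · exact le_trans (Real.rpow_le_one (by linarith) (by linarith [hsum0 y]) hc)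
              (le_max_right _ _)
          · exact le_trans (Real.rpow_le_rpow_of_nonpos (by norm_num) (by linarith) hc.le)
              (le_max_left _ _)
        have hFnn : 0 ≤ F y := mul_nonneg (Real.rpow_nonneg (by linarith) _) hprodnn
        rw [Real.norm_eq_abs, abs_of_nonneg hFnn]
        calc F y = (1 - ∑ i, (y i) ^ 2) ^ α * ∏ i, |y i| ^ γ i := rfl
          _ ≤ C₀ * ∏ i, |y i| ^ γ i := mul_le_mul_of_nonneg_right hle hprodnn
          _ = C₀ * boxProd γ y := by rw [boxProd_eq hyi]
      · rw [integrableOn_finite_iUnion]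
        intro j
        set ej := MeasurableEquiv.piFinSuccAbove (fun _ : Fin (m + 1) => ℝ) j with hejdef
        have hmp : MeasurePreserving ej volume volume :=
          volume_preserving_piFinSuccAbove _ j
        set F' : ℝ × (Fin m → ℝ) → ℝ := fun q =>
          (1 - (q.1 ^ 2 + ∑ i, (q.2 i) ^ 2)) ^ α
            * (|q.1| ^ γ j * ∏ i, |q.2 i| ^ γ (j.succAbove i)) with hF'def
        set A' : Set (ℝ × (Fin m → ℝ)) :=
          {q | q.1 ^ 2 + ∑ i, (q.2 i) ^ 2 < 1 ∧ b ≤ |q.1|} with hA'def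
        have happly : ∀ y : Fin (m + 1) → ℝ, ej y = (y j, fun i => y (j.succAbove i)) :=
          fun y => rfl
        have hcompeq : F = F' ∘ ej := by
          funext y
          show F y = F' (ej y)
          rw [happly]
          show F y = (1 - ((y j) ^ 2 + ∑ i, (y (j.succAbove i)) ^ 2)) ^ α
            * (|y j| ^ γ j * ∏ i, |y (j.succAbove i)| ^ γ (j.succAbove i))
          simp only [hFdef]
          rw [Fin.sum_univ_succAbove (fun i => (y i) ^ 2) j,
            Fin.prod_univ_succAbove (fun i => |y i| ^ γ i) j]
        have hpre : ej ⁻¹' A' = A j := by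
          ext y
          simp only [mem_preimage, happly, hA'def, hAdef, mem_setOf_eq]
          rw [Fin.sum_univ_succAbove (fun i => (y i) ^ 2) j]
        rw [hcompeq, ← hpre]
        exact (hmp.integrableOn_comp_preimage ej.measurableEmbedding).mpr
          (prod_piece_integrable hα (hγ j) (fun i => hγ (j.succAbove i)) hb0 hb1)

end Glue

section Final

lemma norm_sq_eq' {d : ℕ} (x : EuclideanSpace ℝ (Fin d)) : ‖x‖ ^ 2 = ∑ i, (x i) ^ 2 := by
  rw [EuclideanSpace.norm_eq, Real.sq_sqrt (by positivity)]
  simp [Real.norm_eq_abs, sq_abs]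

lemma W_int_aux {d : ℕ} {α : ℝ} {γ : Fin d → ℝ} (hα : -1 < α) (hγ : ∀ i, -1 < γ i) :
    IntegrableOn (fun x : EuclideanSpace ℝ (Fin d) => (1 - ‖x‖ ^ 2) ^ α * ∏ i, |x i| ^ (γ i))
      (ball (0 : EuclideanSpace ℝ (Fin d)) 1) := by
  have he := EuclideanSpace.volume_preserving_symm_measurableEquiv_toLp (Fin d)
  set e := (MeasurableEquiv.toLp 2 (Fin d → ℝ)).symm with hedef
  have hex : ∀ (x : EuclideanSpace ℝ (Fin d)) (i : Fin d), (e x) i = x i := fun x i => rfl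
  have hWF : (fun x : EuclideanSpace ℝ (Fin d) => (1 - ‖x‖ ^ 2) ^ α * ∏ i, |x i| ^ (γ i))
      = (fun y : Fin d → ℝ => (1 - ∑ i, (y i) ^ 2) ^ α * ∏ i, |y i| ^ γ i) ∘ e := by
    funext x
    show _ = (1 - ∑ i, ((e x) i) ^ 2) ^ α * ∏ i, |(e x) i| ^ γ i
    simp_rw [hex]
    rw [norm_sq_eq']
  have hball : e ⁻¹' {y : Fin d → ℝ | ∑ i, (y i) ^ 2 < 1}
      = ball (0 : EuclideanSpace ℝ (Fin d)) 1 := by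
    ext x
    simp only [Set.mem_preimage, Set.mem_setOf_eq, mem_ball_zero_iff]
    simp_rw [hex]
    rw [← norm_sq_eq']
    constructor
    · intro h; nlinarith [norm_nonneg x]
    · intro h; nlinarith [norm_nonneg x]
  rw [hWF, ← hball]
  exact (he.integrableOn_comp_preimage e.measurableEmbedding).mpr (pi_integrable d α hα γ hγ)

end Final

end Analytic



open MvPolynomial

variable {d : ℕ} {α : ℝ} {γ : Fin d → ℝ}

lemma one_sub_norm_pos {x : E d} (hx : x ∈ ball (0 : E d) 1) : 0 < 1 - ‖x‖ ^ 2 := by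
  have h : ‖x‖ < 1 := mem_ball_zero_iff.mp hx
  nlinarith [norm_nonneg x]

lemma W_nonneg {x : E d} (hx : x ∈ ball (0 : E d) 1) : 0 ≤ W α γ x := by
  unfold W
  apply mul_nonneg (Real.rpow_nonneg (one_sub_norm_pos hx).le _)
  exact Finset.prod_nonneg fun i _ => Real.rpow_nonneg (abs_nonneg _) _

lemma measurable_W : Measurable (W (d := d) α γ) := by
  unfold W; fun_prop

lemma continuous_evalP (p : MvPolynomial (Fin d) ℝ) : Continuous (evalP p) := by
  unfold evalP
  induction p using MvPolynomial.induction_on with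
  | C a => simpa using continuous_const
  | add p q hp hq => simp only [map_add]; exact hp.add hq
  | mul_X p i hp => simp only [map_mul, eval_X]; exact hp.mul ((continuous_apply i).comp (PiLp.continuous_ofLp 2 _))

lemma norm_sq_eq (x : E d) : ‖x‖ ^ 2 = ∑ i, (x i) ^ 2 := by
  rw [EuclideanSpace.norm_eq, Real.sq_sqrt (by positivity)]
  simp [Real.norm_eq_abs, sq_abs]

/-- The key analytic fact: the weight is integrable on the ball. -/
lemma W_integrableOn (hα : -1 < α) (hγ : ∀ i, -1 < γ i) :
    IntegrableOn (W α γ) (ball (0 : E d) 1) := by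
  unfold W
  exact W_int_aux hα hγ

lemma integrableOn_evalP_mul_W (hα : -1 < α) (hγ : ∀ i, -1 < γ i)
    (p : MvPolynomial (Fin d) ℝ) :
    IntegrableOn (fun x => evalP p x * W α γ x) (ball (0 : E d) 1) := by
  obtain ⟨M, hM⟩ := (isCompact_closedBall (0 : E d) 1).exists_bound_of_continuousOn
    (continuous_evalP p).continuousOn
  apply Integrable.mono' ((W_integrableOn hα hγ).const_mul M)
  · exact ((continuous_evalP p).measurable.mul measurable_W).aestronglyMeasurable
  · refine (ae_restrict_iff' measurableSet_ball).mpr (ae_of_all _ fun x hx => ?_)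
    have h1 : |evalP p x| ≤ M := by
      simpa [Real.norm_eq_abs] using hM x (ball_subset_closedBall hx)
    have h2 : 0 ≤ W α γ x := W_nonneg hx
    rw [Real.norm_eq_abs, abs_mul, abs_of_nonneg h2]
    exact mul_le_mul_of_nonneg_right h1 h2

/-- bilinear form on polynomials -/
def Bf {d : ℕ} (α : ℝ) (γ : Fin d → ℝ) (P Q : MvPolynomial (Fin d) ℝ) : ℝ :=
  ip α γ (evalP P) (evalP Q)

lemma evalP_mul (P Q : MvPolynomial (Fin d) ℝ) (x : E d) :
    evalP (P * Q) x = evalP P x * evalP Q x := by simp [evalP]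

lemma Bf_def' (P Q : MvPolynomial (Fin d) ℝ) :
    Bf α γ P Q = ∫ x in ball (0 : E d) 1, evalP (P * Q) x * W α γ x := by
  simp only [Bf, ip, evalP_mul]

lemma Bf_symm (P Q : MvPolynomial (Fin d) ℝ) : Bf α γ P Q = Bf α γ Q P := by
  rw [Bf_def', Bf_def', mul_comm]

lemma Bf_add_left (hα : -1 < α) (hγ : ∀ i, -1 < γ i) (P P' Q : MvPolynomial (Fin d) ℝ) :
    Bf α γ (P + P') Q = Bf α γ P Q + Bf α γ P' Q := by
  have h : ∀ x : E d, evalP ((P + P') * Q) x * W α γ x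
      = evalP (P * Q) x * W α γ x + evalP (P' * Q) x * W α γ x := by
    intro x; simp only [evalP_mul, add_mul, evalP]; rw [map_add]; ring
  rw [Bf_def', Bf_def', Bf_def']
  simp_rw [h]
  exact integral_add (integrableOn_evalP_mul_W hα hγ _) (integrableOn_evalP_mul_W hα hγ _)

lemma Bf_smul_left (c : ℝ) (P Q : MvPolynomial (Fin d) ℝ) :
    Bf α γ (c • P) Q = c * Bf α γ P Q := by
  have h : ∀ x : E d, evalP ((c • P) * Q) x * W α γ x = c * (evalP (P * Q) x * W α γ x) := by
    intro x
    simp only [evalP_mul, evalP, smul_eq_C_mul, map_mul, eval_C]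
    ring
  rw [Bf_def', Bf_def']
  simp_rw [h]
  rw [integral_const_mul]

lemma Bf_zero_left (Q : MvPolynomial (Fin d) ℝ) : Bf α γ 0 Q = 0 := by
  have h : ∀ x : E d, evalP ((0 : MvPolynomial (Fin d) ℝ) * Q) x * W α γ x = 0 := by
    intro x; simp [evalP]
  rw [Bf_def']; simp_rw [h]; exact integral_zero _ _

lemma Bf_sub_left (hα : -1 < α) (hγ : ∀ i, -1 < γ i) (P P' Q : MvPolynomial (Fin d) ℝ) :
    Bf α γ (P - P') Q = Bf α γ P Q - Bf α γ P' Q := by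
  have h := Bf_add_left hα hγ (P - P') P' Q
  rw [sub_add_cancel] at h
  linarith

lemma Bf_add_right (hα : -1 < α) (hγ : ∀ i, -1 < γ i) (P Q Q' : MvPolynomial (Fin d) ℝ) :
    Bf α γ P (Q + Q') = Bf α γ P Q + Bf α γ P Q' := by
  rw [Bf_symm, Bf_add_left hα hγ, Bf_symm, Bf_symm Q' P]

lemma Bf_smul_right (c : ℝ) (P Q : MvPolynomial (Fin d) ℝ) :
    Bf α γ P (c • Q) = c * Bf α γ P Q := by
  rw [Bf_symm, Bf_smul_left, Bf_symm]

lemma Bf_nonneg (P : MvPolynomial (Fin d) ℝ) : 0 ≤ Bf α γ P P := by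
  rw [Bf_def']
  apply setIntegral_nonneg measurableSet_ball
  intro x hx
  rw [evalP_mul]
  exact mul_nonneg (mul_self_nonneg _) (W_nonneg hx)

/-- Cauchy–Schwarz-type degeneracy: if `Bf U U = 0` then `U` is orthogonal to everything. -/
lemma Bf_eq_zero_of_self (hα : -1 < α) (hγ : ∀ i, -1 < γ i) {U : MvPolynomial (Fin d) ℝ}
    (hU : Bf α γ U U = 0) (G : MvPolynomial (Fin d) ℝ) : Bf α γ G U = 0 := by
  by_contra hc
  set c := Bf α γ G U with hcdef
  set B := Bf α γ G G with hBdef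
  have key : ∀ t : ℝ, 0 ≤ B + 2 * t * c := by
    intro t
    have h0 := Bf_nonneg (α := α) (γ := γ) (G + t • U)
    have a1 : Bf α γ (G + t • U) (G + t • U)
        = Bf α γ G (G + t • U) + t * Bf α γ U (G + t • U) := by
      rw [Bf_add_left hα hγ, Bf_smul_left]
    have a2 : Bf α γ G (G + t • U) = B + t * c := by
      rw [Bf_add_right hα hγ, Bf_smul_right, ← hcdef, ← hBdef]
    have a3 : Bf α γ U (G + t • U) = c := by
      rw [Bf_add_right hα hγ, Bf_smul_right, hU, Bf_symm U G, ← hcdef]; ring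
    rw [a1, a2, a3] at h0
    linarith
  have h2c : (2 : ℝ) * c ≠ 0 := mul_ne_zero two_ne_zero hc
  have h2 := key (-(B + 1) / (2 * c))
  have h3 : 2 * (-(B + 1) / (2 * c)) * c = -(B + 1) := by
    rw [show 2 * (-(B + 1) / (2 * c)) * c = -(B + 1) / (2 * c) * (2 * c) by ring,
      div_mul_cancel₀ _ h2c]
  rw [h3] at h2
  linarith

-- ==================== negation of variables ====================

def negP {d : ℕ} (P : MvPolynomial (Fin d) ℝ) : MvPolynomial (Fin d) ℝ :=
  aeval (fun i => -X i) P

lemma negP_monomial (m : Fin d →₀ ℕ) (a : ℝ) :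
    negP (monomial m a) = ((-1 : ℝ) ^ (m.sum fun _ e => e)) • monomial m a := by
  unfold negP
  rw [aeval_monomial, smul_eq_C_mul, monomial_eq, algebraMap_eq]
  have hone : ∀ (i : Fin d) (k : ℕ),
      (-X i : MvPolynomial (Fin d) ℝ) ^ k = C ((-1 : ℝ) ^ k) * (X i) ^ k := by
    intro i k
    have h : (-X i : MvPolynomial (Fin d) ℝ) = C (-1 : ℝ) * X i := by
      rw [map_neg, map_one, neg_one_mul]
    rw [h, mul_pow, ← map_pow]
  rw [Finsupp.prod, Finsupp.prod, Finsupp.sum]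
  rw [Finset.prod_congr rfl (fun i _ => hone i (m i)), Finset.prod_mul_distrib, ← map_prod,
    Finset.prod_pow_eq_pow_sum]
  ring

lemma negP_add (P Q : MvPolynomial (Fin d) ℝ) : negP (P + Q) = negP P + negP Q := by
  unfold negP; rw [map_add]

lemma evalP_negP (P : MvPolynomial (Fin d) ℝ) (x : E d) :
    evalP (negP P) x = evalP P (-x) := by
  unfold evalP negP
  have h : (MvPolynomial.eval (fun i => x i)).comp
        ((MvPolynomial.aeval (R := ℝ) (fun i : Fin d => -X i)).toRingHom)
      = MvPolynomial.eval (fun i => (-x : E d) i) := by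
    apply MvPolynomial.ringHom_ext
    · intro a; simp
    · intro i; simp [show (-x : E d) i = -(x i) from rfl]
  exact (DFunLike.congr_fun h P : _)

lemma negP_negP (P : MvPolynomial (Fin d) ℝ) : negP (negP P) = P := by
  unfold negP
  have h : ((MvPolynomial.aeval (R := ℝ) (fun i : Fin d => -X i)).comp
        (MvPolynomial.aeval (R := ℝ) (fun i : Fin d => -X i)))
      = AlgHom.id ℝ (MvPolynomial (Fin d) ℝ) := by
    apply MvPolynomial.algHom_ext; intro i; simp
  simpa using (DFunLike.congr_fun h P : _)

lemma totalDegree_monomial_le (m : Fin d →₀ ℕ) (a : ℝ) :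
    (monomial m a).totalDegree ≤ m.sum fun _ e => e := by
  rcases eq_or_ne a 0 with h | h
  · simp [h]
  · rw [totalDegree_monomial _ h]

lemma totalDegree_negP_le (P : MvPolynomial (Fin d) ℝ) :
    (negP P).totalDegree ≤ P.totalDegree := by
  conv_lhs => rw [← support_sum_monomial_coeff P]
  unfold negP
  rw [map_sum]
  refine le_trans (totalDegree_finset_sum _ _) (Finset.sup_le fun m hm => ?_)
  have h1 : (aeval (fun i => -X i)) (monomial m (coeff m P))
      = ((-1 : ℝ) ^ (m.sum fun _ e => e)) • monomial m (coeff m P) := negP_monomial m _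
  rw [h1]
  exact le_trans (totalDegree_smul_le _ _) (le_trans (totalDegree_monomial_le _ _)
    (le_totalDegree hm))

-- ==================== parity decomposition ====================

def parityP {d : ℕ} (k : ℕ) (P : MvPolynomial (Fin d) ℝ) : MvPolynomial (Fin d) ℝ :=
  ∑ m ∈ P.support.filter fun m => (m.sum fun _ e => e) % 2 = k % 2, monomial m (coeff m P)

def oppParP {d : ℕ} (k : ℕ) (P : MvPolynomial (Fin d) ℝ) : MvPolynomial (Fin d) ℝ :=
  ∑ m ∈ P.support.filter fun m => ¬((m.sum fun _ e => e) % 2 = k % 2), monomial m (coeff m P)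

lemma parity_add_opp (k : ℕ) (P : MvPolynomial (Fin d) ℝ) : parityP k P + oppParP k P = P := by
  rw [parityP, oppParP, Finset.sum_filter_add_sum_filter_not]
  exact support_sum_monomial_coeff P

lemma neg_one_pow_mod {a k : ℕ} (h : a % 2 = k % 2) : ((-1 : ℝ)) ^ a = (-1) ^ k := by
  rcases Nat.even_or_odd k with hk | hk
  · have ha : Even a := by rw [Nat.even_iff] at *; omega
    rw [ha.neg_one_pow, hk.neg_one_pow]
  · have ha : Odd a := by rw [Nat.odd_iff] at *; omega
    rw [ha.neg_one_pow, hk.neg_one_pow]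

lemma negP_parityP (k : ℕ) (P : MvPolynomial (Fin d) ℝ) :
    negP (parityP k P) = ((-1 : ℝ) ^ k) • parityP k P := by
  unfold negP parityP
  rw [map_sum, Finset.smul_sum]
  apply Finset.sum_congr rfl
  intro m hm
  rw [Finset.mem_filter] at hm
  have h := negP_monomial (d := d) m (coeff m P)
  unfold negP at h
  rw [h, neg_one_pow_mod hm.2]

lemma negP_oppParP (k : ℕ) (P : MvPolynomial (Fin d) ℝ) :
    negP (oppParP k P) = (-((-1 : ℝ) ^ k)) • oppParP k P := by
  unfold negP oppParP
  rw [map_sum, Finset.smul_sum]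
  apply Finset.sum_congr rfl
  intro m hm
  rw [Finset.mem_filter] at hm
  have h := negP_monomial (d := d) m (coeff m P)
  unfold negP at h
  rw [h]
  have h2 : (m.sum fun _ e => e) % 2 = (k + 1) % 2 := by omega
  rw [neg_one_pow_mod h2, pow_succ]
  ring_nf

lemma totalDegree_parityP_le {k : ℕ} {P : MvPolynomial (Fin d) ℝ}
    (h : P.totalDegree ≤ k + 1) : (parityP k P).totalDegree ≤ k := by
  refine le_trans (totalDegree_finset_sum _ _) (Finset.sup_le fun m hm => ?_)
  rw [Finset.mem_filter] at hm
  refine le_trans (totalDegree_monomial_le _ _) ?_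
  have h1 : (m.sum fun _ e => e) ≤ k + 1 := (le_totalDegree hm.1).trans h
  have h2 := hm.2
  omega

lemma oppParP_zero {k : ℕ} {P : MvPolynomial (Fin d) ℝ} (h : P.totalDegree ≤ k) (hk : k = 0) :
    oppParP k P = 0 := by
  subst hk
  unfold oppParP
  rw [Finset.filter_false_of_mem, Finset.sum_empty]
  intro m hm
  have h1 : (m.sum fun _ e => e) ≤ 0 := (le_totalDegree hm).trans h
  omega

lemma totalDegree_oppParP_lt {k : ℕ} {P : MvPolynomial (Fin d) ℝ}
    (h : P.totalDegree ≤ k) (hk : 0 < k) : (oppParP k P).totalDegree < k := by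
  refine lt_of_le_of_lt (totalDegree_finset_sum _ _)
    ((Finset.sup_lt_iff (show (⊥ : ℕ) < k from hk)).mpr fun m hm => ?_)
  rw [Finset.mem_filter] at hm
  refine lt_of_le_of_lt (totalDegree_monomial_le _ _) ?_
  have h1 : (m.sum fun _ e => e) ≤ k := (le_totalDegree hm.1).trans h
  have h2 := hm.2
  omega

-- ==================== neg invariance of ip ====================

lemma W_neg (x : E d) : W α γ (-x) = W α γ x := by
  unfold W
  rw [norm_neg]
  congr 1
  refine Finset.prod_congr rfl fun i _ => ?_
  rw [show (-x : E d) i = -(x i) from rfl, abs_neg]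

lemma ip_comp_neg (u v : E d → ℝ) :
    ip α γ (fun x => u (-x)) (fun x => v (-x)) = ip α γ u v := by
  unfold ip
  rw [← integral_indicator measurableSet_ball, ← integral_indicator measurableSet_ball]
  have h2 : ∀ x : E d, (ball (0 : E d) 1).indicator (fun y => u (-y) * v (-y) * W α γ y) x
      = (ball (0 : E d) 1).indicator (fun y => u y * v y * W α γ y) (-x) := by
    intro x
    by_cases hx : x ∈ ball (0 : E d) 1
    · have hx' : -x ∈ ball (0 : E d) 1 := by
        rw [mem_ball_zero_iff] at *; simpa using hx
      rw [Set.indicator_of_mem hx, Set.indicator_of_mem hx', W_neg]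
    · have hx' : -x ∉ ball (0 : E d) 1 := by
        rw [mem_ball_zero_iff] at *; simpa using hx
      rw [Set.indicator_of_notMem hx, Set.indicator_of_notMem hx']
  simp_rw [h2]
  exact integral_neg_eq_self _ _

lemma Bf_negP (P Q : MvPolynomial (Fin d) ℝ) : Bf α γ (negP P) (negP Q) = Bf α γ P Q := by
  unfold Bf
  rw [show evalP (negP P) = fun x => evalP P (-x) from funext (evalP_negP P),
    show evalP (negP Q) = fun x => evalP Q (-x) from funext (evalP_negP Q)]
  exact ip_comp_neg _ _

lemma Bf_negP_left (P Q : MvPolynomial (Fin d) ℝ) :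
    Bf α γ (negP P) Q = Bf α γ P (negP Q) := by
  rw [← Bf_negP P (negP Q), negP_negP]

-- ==================== projection ====================

lemma proj_exists (hα : -1 < α) (hγ : ∀ i, -1 < γ i) (k : ℕ) (Gp : MvPolynomial (Fin d) ℝ) :
    ∃ F : MvPolynomial (Fin d) ℝ, F.totalDegree ≤ k ∧
      ∀ Q, Q.totalDegree ≤ k → Bf α γ F Q = Bf α γ Gp Q := by
  classical
  set S := restrictTotalDegree (Fin d) ℝ k with hS
  haveI hfin : Module.Finite ℝ S := inferInstance
  haveI : Module.Free ℝ S := inferInstance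
  haveI : Module.IsReflexive ℝ S := inferInstance
  let A : S →ₗ[ℝ] Module.Dual ℝ S :=
    LinearMap.mk₂ ℝ (fun u v => Bf α γ u.1 v.1)
      (fun u u' v => by simpa using Bf_add_left hα hγ u.1 u'.1 v.1)
      (fun c u v => by simpa using Bf_smul_left c u.1 v.1)
      (fun u v v' => by simpa using Bf_add_right hα hγ u.1 v.1 v'.1)
      (fun c u v => by simpa using Bf_smul_right c u.1 v.1)
  let ψ : Module.Dual ℝ S :=
    { toFun := fun v => Bf α γ Gp v.1
      map_add' := fun v v' => by simpa using Bf_add_right hα hγ Gp v.1 v'.1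
      map_smul' := fun c v => by simpa using Bf_smul_right c Gp v.1 }
  have hsymm : ∀ u v : S, A u v = A v u := fun u v => Bf_symm u.1 v.1
  have hrange : LinearMap.range A = (LinearMap.ker A).dualAnnihilator := by
    have h2 : A = A.dualMap ∘ₗ Module.Dual.eval ℝ S := by
      refine LinearMap.ext fun u => LinearMap.ext fun v => ?_
      simp only [LinearMap.comp_apply, LinearMap.dualMap_apply, Module.Dual.eval_apply]
      exact hsymm u v
    conv_lhs => rw [h2]
    rw [LinearMap.range_comp_of_range_eq_top _
      (LinearMap.range_eq_top.mpr (Module.bijective_dual_eval ℝ S).2)]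
    exact LinearMap.range_dualMap_eq_dualAnnihilator_ker A
  have hψ : ψ ∈ (LinearMap.ker A).dualAnnihilator := by
    rw [Submodule.mem_dualAnnihilator]
    intro w hw
    have h0 : Bf α γ w.1 w.1 = 0 := by
      have := congrArg (fun φ : Module.Dual ℝ S => φ w) (LinearMap.mem_ker.mp hw)
      simpa [A] using this
    exact Bf_eq_zero_of_self hα hγ h0 Gp
  rw [← hrange] at hψ
  obtain ⟨w, hw⟩ := hψ
  refine ⟨w.1, (mem_restrictTotalDegree _ _ _).mp w.2, fun Q hQ => ?_⟩
  have hQS : Q ∈ S := (mem_restrictTotalDegree _ _ _).mpr hQ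
  have := congrArg (fun φ : Module.Dual ℝ S => φ ⟨Q, hQS⟩) hw
  simpa [A, ψ] using this

-- ==================== orthogonality propagation ====================

lemma key_orth (hα : -1 < α) (hγ : ∀ i, -1 < γ i) {k : ℕ} {U : MvPolynomial (Fin d) ℝ}
    (hUdeg : U.totalDegree ≤ k) (hU : ∀ Q, Q.totalDegree < k → Bf α γ U Q = 0)
    (Q : MvPolynomial (Fin d) ℝ) : Bf α γ U (oppParP k Q) = 0 := by
  set c : ℝ := (-1 : ℝ) ^ k with hc
  have hcc : c * c = 1 := by
    rw [hc, ← pow_add]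
    exact Even.neg_one_pow ⟨k, rfl⟩
  set o := oppParP k Q with ho
  -- step 1: the "wrong parity" part of U is orthogonal to everything of degree < k
  have hUo : ∀ R : MvPolynomial (Fin d) ℝ, R.totalDegree < k → Bf α γ (oppParP k U) R = 0 := by
    intro R hR
    have h1 : Bf α γ (negP U) R = 0 := by
      rw [Bf_negP_left]
      exact hU _ ((totalDegree_negP_le R).trans_lt hR)
    set pu := parityP k U with hpu
    set ou := oppParP k U with hou
    have hsum : pu + ou = U := parity_add_opp k U
    have hne : negP U = c • pu + (-c) • ou := by
      conv_lhs => rw [← hsum, negP_add]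
      rw [hpu, hou, negP_parityP, negP_oppParP]
    have h2o : (2 : ℝ) • ou = U - c • negP U := by
      rw [hne, smul_add, smul_smul, smul_smul, hcc, mul_neg, hcc, ← hsum]
      module
    have e1 : (2 : ℝ) * Bf α γ ou R = 0 := by
      rw [← Bf_smul_left, h2o, Bf_sub_left hα hγ, Bf_smul_left, hU R hR, h1]
      ring
    linarith
  -- step 2: split U
  have hsplit : Bf α γ U o = Bf α γ (parityP k U) o + Bf α γ (oppParP k U) o := by
    conv_lhs => rw [← parity_add_opp k U]
    exact Bf_add_left hα hγ _ _ _
  have hpar : Bf α γ (parityP k U) o = 0 := by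
    have h1 : Bf α γ (negP (parityP k U)) (negP o) = Bf α γ (parityP k U) o := Bf_negP _ _
    rw [ho, negP_parityP, negP_oppParP, Bf_smul_left, Bf_smul_right, ← hc, ← ho] at h1
    set B := Bf α γ (parityP k U) o
    have : c * (-c * B) = -(B) := by
      rw [show c * (-c * B) = -((c * c) * B) by ring, hcc]; ring
    rw [this] at h1
    linarith
  have hopp : Bf α γ (oppParP k U) o = 0 := by
    rcases Nat.eq_zero_or_pos k with hk | hk
    · rw [oppParP_zero hUdeg hk, Bf_zero_left]
    · rw [Bf_symm]
      exact Bf_eq_zero_of_self hα hγ (hUo _ (totalDegree_oppParP_lt hUdeg hk)) o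
  rw [hsplit, hpar, hopp]
  ring

-- ==================== raising the parameter ====================

lemma evalP_oneSub (R : MvPolynomial (Fin d) ℝ) (x : E d) :
    evalP ((1 - ∑ i, (X i) ^ 2) * R) x = (1 - ‖x‖ ^ 2) * evalP R x := by
  rw [evalP_mul]
  congr 1
  unfold evalP
  rw [map_sub, map_sum, map_one]
  rw [norm_sq_eq]
  congr 1
  exact Finset.sum_congr rfl fun i _ => by rw [map_pow, eval_X]

lemma Bf_succ (P Q : MvPolynomial (Fin d) ℝ) :
    Bf α γ ((1 - ∑ i, (X i) ^ 2) * P) Q = Bf (α + 1) γ P Q := by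
  rw [Bf_def', Bf_def']
  apply setIntegral_congr_fun measurableSet_ball
  intro x hx
  have h1 : 0 < 1 - ‖x‖ ^ 2 := one_sub_norm_pos hx
  have h2 : evalP ((1 - ∑ i, (X i) ^ 2) * P * Q) x = (1 - ‖x‖ ^ 2) * evalP (P * Q) x := by
    rw [mul_assoc, evalP_oneSub]
  show evalP ((1 - ∑ i, (X i) ^ 2) * P * Q) x * W α γ x = evalP (P * Q) x * W (α + 1) γ x
  rw [h2]
  unfold W
  rw [Real.rpow_add_one h1.ne']
  ring


end StmtAux

open StmtAux in
theorem stmt8 (d : ℕ) (α : ℝ) (hα : -1 < α) (γ : Fin d → ℝ) (hγ : ∀ i, -1 < γ i)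
    (k : ℕ) (p : E d → ℝ) (hp : memV (α + 1) γ k p) :
    ∃ f₁ f₂ : E d → ℝ, memV α γ k f₁ ∧ memV α γ (k + 2) f₂ ∧
      ∀ x : E d, (1 - ‖x‖ ^ 2) * p x = f₁ x + f₂ x := by
  classical
  open MvPolynomial in
  obtain ⟨⟨P, hPdeg, hPf⟩, hPorth⟩ := hp
  subst hPf
  have hα1 : (-1 : ℝ) < α + 1 := by linarith
  have hBP : ∀ q : MvPolynomial (Fin d) ℝ, q.totalDegree < k → Bf (α + 1) γ P q = 0 :=
    fun q hq => hPorth q hq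
  set G : MvPolynomial (Fin d) ℝ := (1 - ∑ i, (X i) ^ 2) * P with hG
  obtain ⟨F, hFdeg, hFproj⟩ := proj_exists hα hγ k G
  have hGB : ∀ q : MvPolynomial (Fin d) ℝ, Bf α γ G q = Bf (α + 1) γ P q := fun q => Bf_succ P q
  have hForth : ∀ q : MvPolynomial (Fin d) ℝ, q.totalDegree < k → Bf α γ F q = 0 := by
    intro q hq
    rw [hFproj q hq.le, hGB, hBP q hq]
  refine ⟨evalP F, evalP (G - F), ⟨⟨F, hFdeg, rfl⟩, fun q hq => hForth q hq⟩, ⟨?_, ?_⟩, ?_⟩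
  · -- polynomial witness of degree ≤ k + 2
    refine ⟨G - F, ?_, rfl⟩
    have hdegS : (∑ i, (X i : MvPolynomial (Fin d) ℝ) ^ 2).totalDegree ≤ 2 :=
      le_trans (totalDegree_finset_sum _ _) (Finset.sup_le fun i _ => by
        rw [totalDegree_X_pow])
    have hdeg1 : ((1 : MvPolynomial (Fin d) ℝ) - ∑ i, (X i) ^ 2).totalDegree ≤ 2 := by
      rw [sub_eq_add_neg]
      refine le_trans (totalDegree_add _ _) ?_
      rw [totalDegree_neg]
      simp only [totalDegree_one, sup_le_iff]
      exact ⟨by omega, hdegS⟩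
    have hdegG : G.totalDegree ≤ k + 2 := by
      refine le_trans (totalDegree_mul _ _) ?_
      have := add_le_add hdeg1 hPdeg
      omega
    rw [sub_eq_add_neg]
    refine le_trans (totalDegree_add _ _) ?_
    rw [totalDegree_neg]
    simp only [sup_le_iff]
    exact ⟨hdegG, by omega⟩
  · -- orthogonality at level k + 2
    intro q hq
    have hq' : q.totalDegree ≤ k + 1 := by omega
    show Bf α γ (G - F) q = 0
    have hBsub : Bf α γ (G - F) q
        = (Bf α γ G (parityP k q) - Bf α γ F (parityP k q))
          + (Bf α γ G (oppParP k q) - Bf α γ F (oppParP k q)) := by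
      conv_lhs => rw [← parity_add_opp k q]
      rw [Bf_sub_left hα hγ, Bf_add_right hα hγ, Bf_add_right hα hγ]
      ring
    have h1 : Bf α γ F (parityP k q) = Bf α γ G (parityP k q) :=
      hFproj _ (totalDegree_parityP_le hq')
    have h2 : Bf α γ G (oppParP k q) = 0 := by
      rw [hGB]
      exact key_orth hα1 hγ hPdeg hBP q
    have h3 : Bf α γ F (oppParP k q) = 0 := key_orth hα hγ hFdeg hForth q
    rw [hBsub, h1, h2, h3]
    ring
  · intro x
    have h1 : evalP G x = (1 - ‖x‖ ^ 2) * evalP P x := evalP_oneSub P x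
    have h2 : evalP (G - F) x = evalP G x - evalP F x := by
      unfold evalP; rw [map_sub]
    rw [h2, h1]
    ring
end
end
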